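/- arXiv:1807.01180 — 2 statements merged into one kernel-verified Lean document; each statement's English description precedes it below -/
import Mathlib

section
/- Let r ≥ 2 and let H_1 and H_2 be vertex-disjoint r-uniform supertrees with distinguished vertices v_1 ∈ V(H_1) and v_2 ∈ V(H_2). Let T be the supertree obtained from the disjoint union H_1 ∪ H_2 by adding one new edge e consisting of v_1, v_2 and r−2 new vertices, and let T' be the hypergraph obtained from H_1 ∪ H_2 by identifying v_1 and v_2 into a single vertex w (the coalescence H_1·H_2) and then adding a pendant edge consisting of w and r−1 new vertices. Then φ(T, x) − φ(T', x) = x^{r−2} · ( x·φ(H_2 − v_2, x) − φ(H_2, x) ) · Σ_{e_i ∈ E_{v_1}(H_1)} φ(H_1 − V(e_i), x), where the sum runs over all edges e_i of H_1 containing v_1. -/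
open Classical

noncomputable section

/-- A finite hypergraph: a finite vertex set together with a finite set of edges,
each edge being a finite set of vertices. -/
structure FinHypergraph (α : Type*) where
  verts : Finset α
  edges : Finset (Finset α)

namespace FinHypergraph

variable {α : Type*}

/-- Every edge of `H` is a subset of the vertex set of `H`. -/
def WellFormed (H : FinHypergraph α) : Prop := ∀ e ∈ H.edges, e ⊆ H.verts

/-- `H` is `r`-uniform: every edge has exactly `r` vertices. -/
def Uniform (H : FinHypergraph α) (r : ℕ) : Prop := ∀ e ∈ H.edges, e.card = r

/-- A set of edges is a matching if its members are pairwise disjoint. -/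
def IsMatchingSet (M : Finset (Finset α)) : Prop :=
  ∀ e ∈ M, ∀ f ∈ M, e ≠ f → Disjoint e f

/-- `m(H,k)`: the number of matchings of `H` consisting of exactly `k` edges. -/
noncomputable def matchCount (H : FinHypergraph α) (k : ℕ) : ℕ :=
  (H.edges.powerset.filter (fun M => M.card = k ∧ IsMatchingSet M)).card

/-- The matching polynomial `φ(H,x) = Σ_k (-1)^k m(H,k) x^(n - r·k)` of an
`r`-uniform hypergraph `H` with `n` vertices, evaluated at a real number `x`. -/
noncomputable def matchPoly (H : FinHypergraph α) (r : ℕ) (x : ℝ) : ℝ :=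
  ∑ k ∈ Finset.range (H.verts.card + 1),
    (-1 : ℝ) ^ k * (H.matchCount k : ℝ) * x ^ (H.verts.card - r * k)

/-- `H − S`: delete the vertices of `S` and all edges meeting `S`. -/
def removeVerts (H : FinHypergraph α) (S : Finset α) : FinHypergraph α :=
  ⟨H.verts \ S, H.edges.filter (fun e => Disjoint e S)⟩

/-- `H` is connected: nonempty vertex set, and any two vertices are linked by a chain of
vertices successively lying in a common edge. -/
def Connected (H : FinHypergraph α) : Prop :=
  H.verts.Nonempty ∧ ∀ u ∈ H.verts, ∀ v ∈ H.verts,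
    Relation.ReflTransGen (fun a b => ∃ e ∈ H.edges, a ∈ e ∧ b ∈ e) u v

/-- `H` has a cycle: an alternating sequence `v_0 e_0 v_1 e_1 … v_{ℓ-1} e_{ℓ-1} v_0`
(with `ℓ ≥ 2`) of distinct vertices and distinct edges such that consecutive vertices lie
in the intermediate edge. -/
def HasCycle (H : FinHypergraph α) : Prop :=
  ∃ (ℓ : ℕ) (v : ℕ → α) (e : ℕ → Finset α), 2 ≤ ℓ ∧
    Set.InjOn v (Set.Iio ℓ) ∧ Set.InjOn e (Set.Iio ℓ) ∧
    ∀ i < ℓ, e i ∈ H.edges ∧ v i ∈ e i ∧ v ((i + 1) % ℓ) ∈ e i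

/-- An `r`-uniform supertree: a connected acyclic `r`-uniform hypergraph. -/
def IsSupertree (H : FinHypergraph α) (r : ℕ) : Prop :=
  H.WellFormed ∧ H.Uniform r ∧ H.Connected ∧ ¬ H.HasCycle

end FinHypergraph

open FinHypergraph

namespace ER

variable {α : Type*}

lemma hg_ext {H K : FinHypergraph α} (h1 : H.verts = K.verts) (h2 : H.edges = K.edges) : H = K := by
  cases H; cases K; simp_all

/-- the set of matchings -/
def Ms (H : FinHypergraph α) : Finset (Finset (Finset α)) :=
  H.edges.powerset.filter (fun M => IsMatchingSet M)

lemma mem_Ms {H : FinHypergraph α} {M : Finset (Finset α)} :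
    M ∈ Ms H ↔ M ⊆ H.edges ∧ IsMatchingSet M := by
  simp [Ms, Finset.mem_filter, Finset.mem_powerset]

lemma rv_wf {H : FinHypergraph α} (hwf : H.WellFormed) (S : Finset α) :
    (H.removeVerts S).WellFormed := by
  intro e he
  simp only [removeVerts, Finset.mem_filter] at he
  intro a ha
  simp only [removeVerts, Finset.mem_sdiff]
  exact ⟨hwf e he.1 ha, fun hc => Finset.disjoint_left.mp he.2 ha hc⟩

lemma rv_unif {H : FinHypergraph α} {r : ℕ} (hu : H.Uniform r) (S : Finset α) :
    (H.removeVerts S).Uniform r := by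
  intro e he
  simp only [removeVerts, Finset.mem_filter] at he
  exact hu e he.1

lemma bound {H : FinHypergraph α} {r : ℕ} (hwf : H.WellFormed) (hu : H.Uniform r)
    {M : Finset (Finset α)} (hM : M ∈ Ms H) : r * M.card ≤ H.verts.card := by
  rw [mem_Ms] at hM
  obtain ⟨hsub, hmatch⟩ := hM
  have hdisj : ∀ e ∈ M, ∀ f ∈ M, e ≠ f → Disjoint (id e) (id f) := hmatch
  have h1 : M.biUnion id ⊆ H.verts := by
    intro a ha
    obtain ⟨e, he, hae⟩ := Finset.mem_biUnion.mp ha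
    exact hwf e (hsub he) hae
  calc r * M.card = ∑ e ∈ M, (id e).card := by
        have h2 : ∀ e ∈ M, (id e).card = r := fun e he => hu e (hsub he)
        rw [Finset.sum_congr rfl h2, Finset.sum_const, smul_eq_mul, mul_comm]
    _ = (M.biUnion id).card := (Finset.card_biUnion hdisj).symm
    _ ≤ H.verts.card := Finset.card_le_card h1

lemma matchPoly_eq (H : FinHypergraph α) (r : ℕ) (hr : 1 ≤ r)
    (hwf : H.WellFormed) (hu : H.Uniform r) (x : ℝ) :
    H.matchPoly r x = ∑ M ∈ Ms H, (-1 : ℝ) ^ M.card * x ^ (H.verts.card - r * M.card) := by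
  rw [matchPoly]
  have hmap : ∀ M ∈ Ms H, M.card ∈ Finset.range (H.verts.card + 1) := by
    intro M hM
    simp only [Finset.mem_range]
    have := bound hwf hu hM
    have h2 : M.card ≤ r * M.card := Nat.le_mul_of_pos_left _ hr
    omega
  have hsplit := Finset.sum_fiberwise_of_maps_to (g := fun (M : Finset (Finset α)) => M.card) hmap
    (fun (M : Finset (Finset α)) => (-1 : ℝ) ^ M.card * x ^ (H.verts.card - r * M.card))
  rw [← hsplit]
  · apply Finset.sum_congr rfl
    intro k _
    have hm : (H.matchCount k : ℝ) = (((Ms H).filter (fun M => M.card = k)).card : ℝ) := by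
      congr 1
      unfold matchCount Ms
      congr 1
      ext M
      simp only [Finset.mem_filter, Finset.mem_powerset]
      tauto
    have : ∀ M ∈ (Ms H).filter (fun M => M.card = k),
        (-1 : ℝ) ^ M.card * x ^ (H.verts.card - r * M.card)
          = (-1 : ℝ) ^ k * x ^ (H.verts.card - r * k) := by
      intro M hM
      rw [(Finset.mem_filter.mp hM).2]
    rw [Finset.sum_congr rfl this, Finset.sum_const, nsmul_eq_mul, hm]
    ring


/-- adding isolated vertices multiplies by a power of x -/
lemma isolated (H : FinHypergraph α) (r : ℕ) (hr : 1 ≤ r)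
    (hwf : H.WellFormed) (hu : H.Uniform r) (S : Finset α) (hS : Disjoint S H.verts) (x : ℝ) :
    FinHypergraph.matchPoly ⟨H.verts ∪ S, H.edges⟩ r x = x ^ S.card * H.matchPoly r x := by
  have hwf' : FinHypergraph.WellFormed ⟨H.verts ∪ S, H.edges⟩ := by
    intro e he a ha
    exact Finset.mem_union_left _ (hwf e he ha)
  rw [matchPoly_eq _ r hr hwf' hu x, matchPoly_eq H r hr hwf hu x, Finset.mul_sum]
  have hMs : Ms (⟨H.verts ∪ S, H.edges⟩ : FinHypergraph α) = Ms H := rfl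
  rw [hMs]
  apply Finset.sum_congr rfl
  intro M hM
  have hb := bound hwf hu hM
  have hcard : (Finset.card (H.verts ∪ S)) = H.verts.card + S.card := by
    rw [Finset.card_union_of_disjoint hS.symm]
  show (-1:ℝ) ^ M.card * x ^ ((H.verts ∪ S).card - r * M.card) = _
  rw [hcard]
  have hexp : H.verts.card + S.card - r * M.card = S.card + (H.verts.card - r * M.card) := by omega
  rw [hexp, pow_add]
  ring

/-- matchings of a disjoint union multiply -/
lemma union_prod (H1 H2 : FinHypergraph α) (r : ℕ) (hr : 1 ≤ r)
    (hwf1 : H1.WellFormed) (hu1 : H1.Uniform r)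
    (hwf2 : H2.WellFormed) (hu2 : H2.Uniform r)
    (hd : Disjoint H1.verts H2.verts) (x : ℝ) :
    FinHypergraph.matchPoly ⟨H1.verts ∪ H2.verts, H1.edges ∪ H2.edges⟩ r x
      = H1.matchPoly r x * H2.matchPoly r x := by
  have hne1 : ∀ e ∈ H1.edges, e.Nonempty := by
    intro e he
    rw [← Finset.card_pos, hu1 e he]; omega
  have hE : ∀ e, e ∈ H1.edges → e ∈ H2.edges → False := by
    intro e he1 he2
    obtain ⟨a, ha⟩ := hne1 e he1
    exact Finset.disjoint_left.mp hd (hwf1 e he1 ha) (hwf2 e he2 ha)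
  have hwf : FinHypergraph.WellFormed ⟨H1.verts ∪ H2.verts, H1.edges ∪ H2.edges⟩ := by
    intro e he a ha
    rcases Finset.mem_union.mp he with h | h
    · exact Finset.mem_union_left _ (hwf1 e h ha)
    · exact Finset.mem_union_right _ (hwf2 e h ha)
  have hu : FinHypergraph.Uniform ⟨H1.verts ∪ H2.verts, H1.edges ∪ H2.edges⟩ r := by
    intro e he
    rcases Finset.mem_union.mp he with h | h
    · exact hu1 e h
    · exact hu2 e h
  rw [matchPoly_eq _ r hr hwf hu x, matchPoly_eq H1 r hr hwf1 hu1 x,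
    matchPoly_eq H2 r hr hwf2 hu2 x, Finset.sum_mul_sum, ← Finset.sum_product']
  have hcard : ((⟨H1.verts ∪ H2.verts, H1.edges ∪ H2.edges⟩ : FinHypergraph α)).verts.card
      = H1.verts.card + H2.verts.card := Finset.card_union_of_disjoint hd
  apply Finset.sum_nbij' (i := fun M => (M.filter (· ∈ H1.edges), M.filter (· ∈ H2.edges)))
    (j := fun p => p.1 ∪ p.2)
  · intro M hM
    rw [mem_Ms] at hM
    obtain ⟨hsub, hmatch⟩ := hM
    simp only [Finset.mem_product, mem_Ms]
    refine ⟨⟨fun e he => (Finset.mem_filter.mp he).2, ?_⟩,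
           fun e he => (Finset.mem_filter.mp he).2, ?_⟩ <;>
    · intro e he f hf hne
      exact hmatch e (Finset.filter_subset _ _ he) f (Finset.filter_subset _ _ hf) hne
  · intro p hp
    simp only [Finset.mem_product, mem_Ms] at hp
    obtain ⟨⟨hs1, hm1⟩, hs2, hm2⟩ := hp
    rw [mem_Ms]
    constructor
    · intro e he
      rcases Finset.mem_union.mp he with h | h
      · exact Finset.mem_union_left _ (hs1 h)
      · exact Finset.mem_union_right _ (hs2 h)
    · intro e he f hf hne
      rcases Finset.mem_union.mp he with h | h <;> rcases Finset.mem_union.mp hf with h' | h'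
      · exact hm1 e h f h' hne
      · exact Finset.disjoint_left.mpr (fun a ha ha' =>
          Finset.disjoint_left.mp hd (hwf1 e (hs1 h) ha) (hwf2 f (hs2 h') ha'))
      · exact Finset.disjoint_right.mpr (fun a haf hae =>
          Finset.disjoint_left.mp hd (hwf1 f (hs1 h') haf) (hwf2 e (hs2 h) hae))
      · exact hm2 e h f h' hne
  · intro M hM
    rw [mem_Ms] at hM
    show M.filter (· ∈ H1.edges) ∪ M.filter (· ∈ H2.edges) = M
    ext e
    simp only [Finset.mem_union, Finset.mem_filter]
    constructor
    · rintro (⟨he, _⟩ | ⟨he, _⟩) <;> exact he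
    · intro he
      rcases Finset.mem_union.mp (hM.1 he) with h | h
      · exact Or.inl ⟨he, h⟩
      · exact Or.inr ⟨he, h⟩
  · intro p hp
    simp only [Finset.mem_product, mem_Ms] at hp
    obtain ⟨⟨hs1, _⟩, hs2, _⟩ := hp
    have h1 : (p.1 ∪ p.2).filter (· ∈ H1.edges) = p.1 := by
      ext e
      simp only [Finset.mem_filter, Finset.mem_union]
      constructor
      · rintro ⟨h | h, he1⟩
        · exact h
        · exact absurd he1 (fun hc => hE e hc (hs2 h))
      · intro h
        exact ⟨Or.inl h, hs1 h⟩
    have h2 : (p.1 ∪ p.2).filter (· ∈ H2.edges) = p.2 := by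
      ext e
      simp only [Finset.mem_filter, Finset.mem_union]
      constructor
      · rintro ⟨h | h, he2⟩
        · exact absurd he2 (fun hc => hE e (hs1 h) hc)
        · exact h
      · intro h
        exact ⟨Or.inr h, hs2 h⟩
    simp [h1, h2]
  · intro M hM
    rw [mem_Ms] at hM
    obtain ⟨hsub, hmatch⟩ := hM
    have hM1 : M.filter (· ∈ H1.edges) ∈ Ms H1 := by
      rw [mem_Ms]
      exact ⟨fun e he => (Finset.mem_filter.mp he).2, fun e he f hf hne =>
        hmatch e (Finset.filter_subset _ _ he) f (Finset.filter_subset _ _ hf) hne⟩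
    have hM2 : M.filter (· ∈ H2.edges) ∈ Ms H2 := by
      rw [mem_Ms]
      exact ⟨fun e he => (Finset.mem_filter.mp he).2, fun e he f hf hne =>
        hmatch e (Finset.filter_subset _ _ he) f (Finset.filter_subset _ _ hf) hne⟩
    have hb1 := bound hwf1 hu1 hM1
    have hb2 := bound hwf2 hu2 hM2
    have hMeq : M = M.filter (· ∈ H1.edges) ∪ M.filter (· ∈ H2.edges) := by
      ext e
      simp only [Finset.mem_union, Finset.mem_filter]
      constructor
      · intro he
        rcases Finset.mem_union.mp (hsub he) with h | h
        · exact Or.inl ⟨he, h⟩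
        · exact Or.inr ⟨he, h⟩
      · rintro (⟨he, _⟩ | ⟨he, _⟩) <;> exact he
    have hdisjf : Disjoint (M.filter (· ∈ H1.edges)) (M.filter (· ∈ H2.edges)) := by
      rw [Finset.disjoint_left]
      intro e he1 he2
      exact hE e (Finset.mem_filter.mp he1).2 (Finset.mem_filter.mp he2).2
    have hck : M.card = (M.filter (· ∈ H1.edges)).card + (M.filter (· ∈ H2.edges)).card := by
      conv_lhs => rw [hMeq]
      exact Finset.card_union_of_disjoint hdisjf
    show (-1:ℝ) ^ M.card * x ^ ((⟨H1.verts ∪ H2.verts, H1.edges ∪ H2.edges⟩ : FinHypergraph α).verts.card - r * M.card) = _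
    rw [hcard, hck]
    have hexp : H1.verts.card + H2.verts.card - r * ((M.filter (· ∈ H1.edges)).card + (M.filter (· ∈ H2.edges)).card)
        = (H1.verts.card - r * (M.filter (· ∈ H1.edges)).card)
          + (H2.verts.card - r * (M.filter (· ∈ H2.edges)).card) := by
      have := Nat.mul_add r (M.filter (· ∈ H1.edges)).card (M.filter (· ∈ H2.edges)).card
      omega
    rw [hexp, pow_add, pow_add]
    ring


/-- sum over matchings containing a fixed edge -/
lemma sum_containing (H : FinHypergraph α) (r : ℕ) (hr : 1 ≤ r)
    (hwf : H.WellFormed) (hu : H.Uniform r) (e0 : Finset α) (he0 : e0 ∈ H.edges) (x : ℝ) :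
    ∑ M ∈ (Ms H).filter (fun M => e0 ∈ M),
        (-1 : ℝ) ^ M.card * x ^ (H.verts.card - r * M.card)
      = - (H.removeVerts e0).matchPoly r x := by
  have he0sub : e0 ⊆ H.verts := hwf e0 he0
  have he0card : e0.card = r := hu e0 he0
  have he0ne : e0.Nonempty := by rw [← Finset.card_pos, he0card]; omega
  have hvcard : (H.removeVerts e0).verts.card = H.verts.card - r := by
    show (H.verts \ e0).card = _
    rw [Finset.card_sdiff_of_subset he0sub, he0card]
  rw [matchPoly_eq _ r hr (rv_wf hwf e0) (rv_unif hu e0) x, ← Finset.sum_neg_distrib]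
  apply Finset.sum_nbij' (i := fun M => M.erase e0) (j := fun M => insert e0 M)
  · intro M hM
    rw [Finset.mem_filter, mem_Ms] at hM
    obtain ⟨⟨hsub, hmatch⟩, hmem⟩ := hM
    rw [mem_Ms]
    constructor
    · intro e he
      have hene : e ≠ e0 := Finset.ne_of_mem_erase he
      have heM : e ∈ M := Finset.mem_of_mem_erase he
      show e ∈ H.edges.filter _
      rw [Finset.mem_filter]
      exact ⟨hsub heM, hmatch e heM e0 hmem hene⟩
    · intro e he f hf hne
      exact hmatch e (Finset.mem_of_mem_erase he) f (Finset.mem_of_mem_erase hf) hne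
  · intro M hM
    rw [mem_Ms] at hM
    obtain ⟨hsub, hmatch⟩ := hM
    rw [Finset.mem_filter, mem_Ms]
    refine ⟨⟨?_, ?_⟩, Finset.mem_insert_self _ _⟩
    · intro e he
      rcases Finset.mem_insert.mp he with h | h
      · exact h ▸ he0
      · exact Finset.mem_filter.mp (hsub h) |>.1
    · intro e he f hf hne
      rcases Finset.mem_insert.mp he with h | h <;> rcases Finset.mem_insert.mp hf with h' | h'
      · exact absurd (h.trans h'.symm) hne
      · subst h
        exact (Finset.mem_filter.mp (hsub h')).2.symm
      · subst h'
        exact (Finset.mem_filter.mp (hsub h)).2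
      · exact hmatch e h f h' hne
  · intro M hM
    rw [Finset.mem_filter] at hM
    exact Finset.insert_erase hM.2
  · intro M hM
    rw [mem_Ms] at hM
    apply Finset.erase_insert
    intro hc
    have := (Finset.mem_filter.mp (hM.1 hc)).2
    exact he0ne.ne_empty (by simpa using disjoint_self.mp this)
  · intro M hM
    rw [Finset.mem_filter, mem_Ms] at hM
    obtain ⟨⟨hsub, hmatch⟩, hmem⟩ := hM
    have hcard : M.card = (M.erase e0).card + 1 := by
      rw [Finset.card_erase_of_mem hmem]
      have : 0 < M.card := Finset.card_pos.mpr ⟨e0, hmem⟩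
      omega
    have hMe : M.erase e0 ∈ Ms (H.removeVerts e0) := by
      rw [mem_Ms]
      constructor
      · intro e he
        show e ∈ H.edges.filter _
        rw [Finset.mem_filter]
        exact ⟨hsub (Finset.mem_of_mem_erase he),
          hmatch e (Finset.mem_of_mem_erase he) e0 hmem (Finset.ne_of_mem_erase he)⟩
      · intro e he f hf hne
        exact hmatch e (Finset.mem_of_mem_erase he) f (Finset.mem_of_mem_erase hf) hne
    have hb := bound (rv_wf hwf e0) (rv_unif hu e0) hMe
    rw [hvcard] at hb
    have hrn : r ≤ H.verts.card := by
      calc r = e0.card := he0card.symm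
      _ ≤ H.verts.card := Finset.card_le_card he0sub
    have hexp : H.verts.card - r * ((M.erase e0).card + 1)
        = H.verts.card - r - r * (M.erase e0).card := by
      have := Nat.mul_add r (M.erase e0).card 1
      omega
    rw [hcard, hexp, hvcard, pow_succ]
    ring

/-- edge deletion identity -/
lemma edge_delete (H : FinHypergraph α) (r : ℕ) (hr : 1 ≤ r)
    (hwf : H.WellFormed) (hu : H.Uniform r) (e0 : Finset α) (he0 : e0 ∈ H.edges) (x : ℝ) :
    H.matchPoly r x = FinHypergraph.matchPoly ⟨H.verts, H.edges.erase e0⟩ r x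
      - (H.removeVerts e0).matchPoly r x := by
  have hwf' : FinHypergraph.WellFormed ⟨H.verts, H.edges.erase e0⟩ :=
    fun e he => hwf e (Finset.mem_of_mem_erase he)
  have hu' : FinHypergraph.Uniform ⟨H.verts, H.edges.erase e0⟩ r :=
    fun e he => hu e (Finset.mem_of_mem_erase he)
  rw [matchPoly_eq H r hr hwf hu x,
    ← Finset.sum_filter_add_sum_filter_not (Ms H) (fun M => e0 ∈ M),
    sum_containing H r hr hwf hu e0 he0 x, matchPoly_eq _ r hr hwf' hu' x]
  have hset : (Ms H).filter (fun M => ¬ e0 ∈ M) = Ms (⟨H.verts, H.edges.erase e0⟩ : FinHypergraph α) := by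
    ext M
    simp only [Finset.mem_filter, mem_Ms]
    constructor
    · rintro ⟨⟨hsub, hm⟩, hne⟩
      refine ⟨fun e he => Finset.mem_erase.mpr ⟨?_, hsub he⟩, hm⟩
      rintro rfl
      exact hne he
    · rintro ⟨hsub, hm⟩
      refine ⟨⟨fun e he => Finset.mem_of_mem_erase (hsub he), hm⟩, fun hc => ?_⟩
      exact absurd rfl (Finset.mem_erase.mp (hsub hc)).1
  rw [hset]
  ring

/-- vertex deletion identity -/
lemma vertex_delete (H : FinHypergraph α) (r : ℕ) (hr : 1 ≤ r)
    (hwf : H.WellFormed) (hu : H.Uniform r) (v : α) (hv : v ∈ H.verts) (x : ℝ) :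
    H.matchPoly r x = x * (H.removeVerts {v}).matchPoly r x
      - ∑ e ∈ H.edges.filter (fun e => v ∈ e), (H.removeVerts e).matchPoly r x := by
  rw [matchPoly_eq H r hr hwf hu x,
    ← Finset.sum_filter_add_sum_filter_not (Ms H) (fun M => ∃ e ∈ M, v ∈ e)]
  have hcov : (Ms H).filter (fun M => ∃ e ∈ M, v ∈ e)
      = (H.edges.filter (fun e => v ∈ e)).biUnion
          (fun e => (Ms H).filter (fun M => e ∈ M)) := by
    ext M
    simp only [Finset.mem_filter, Finset.mem_biUnion, mem_Ms]
    constructor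
    · rintro ⟨⟨hsub, hm⟩, e, heM, hve⟩
      exact ⟨e, ⟨hsub heM, hve⟩, ⟨hsub, hm⟩, heM⟩
    · rintro ⟨e, ⟨heE, hve⟩, ⟨hsub, hm⟩, heM⟩
      exact ⟨⟨hsub, hm⟩, e, heM, hve⟩
  have hpd : Set.PairwiseDisjoint ↑(H.edges.filter (fun e => v ∈ e))
      (fun e => (Ms H).filter (fun M => e ∈ M)) := by
    intro e he f hf hne
    simp only [Finset.coe_filter, Set.mem_setOf_eq] at he hf
    apply Finset.disjoint_left.mpr
    intro M hMe hMf
    rw [Finset.mem_filter, mem_Ms] at hMe hMf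
    have hd := hMe.1.2 e hMe.2 f hMf.2 hne
    exact Finset.disjoint_left.mp hd he.2 hf.2
  rw [hcov, Finset.sum_biUnion hpd]
  have hinner : ∀ e ∈ H.edges.filter (fun e => v ∈ e),
      ∑ M ∈ (Ms H).filter (fun M => e ∈ M),
          (-1 : ℝ) ^ M.card * x ^ (H.verts.card - r * M.card)
        = - (H.removeVerts e).matchPoly r x := by
    intro e he
    exact sum_containing H r hr hwf hu e (Finset.mem_filter.mp he).1 x
  rw [Finset.sum_congr rfl hinner, Finset.sum_neg_distrib]
  have hvcard : (H.removeVerts {v}).verts.card = H.verts.card - 1 := by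
    show (H.verts \ {v}).card = _
    rw [Finset.sdiff_singleton_eq_erase, Finset.card_erase_of_mem hv]
  have hnoncov : ∑ M ∈ (Ms H).filter (fun M => ¬ ∃ e ∈ M, v ∈ e),
      (-1 : ℝ) ^ M.card * x ^ (H.verts.card - r * M.card)
        = x * (H.removeVerts {v}).matchPoly r x := by
    rw [matchPoly_eq _ r hr (rv_wf hwf {v}) (rv_unif hu {v}) x, Finset.mul_sum]
    have hset : (Ms H).filter (fun M => ¬ ∃ e ∈ M, v ∈ e) = Ms (H.removeVerts {v}) := by
      ext M
      simp only [Finset.mem_filter, mem_Ms, not_exists]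
      constructor
      · rintro ⟨⟨hsub, hm⟩, hnv⟩
        refine ⟨fun e he => ?_, hm⟩
        show e ∈ H.edges.filter _
        rw [Finset.mem_filter, Finset.disjoint_singleton_right]
        exact ⟨hsub he, fun hc => hnv e ⟨he, hc⟩⟩
      · rintro ⟨hsub, hm⟩
        refine ⟨⟨fun e he => (Finset.mem_filter.mp (hsub he)).1, hm⟩, ?_⟩
        rintro e ⟨heM, hve⟩
        have := (Finset.mem_filter.mp (hsub heM)).2
        exact Finset.disjoint_singleton_right.mp this hve
    rw [hset]
    apply Finset.sum_congr rfl
    intro M hM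
    have hb := bound (rv_wf hwf {v}) (rv_unif hu {v}) hM
    rw [hvcard] at hb
    have hv1 : 1 ≤ H.verts.card := Finset.card_pos.mpr ⟨v, hv⟩
    have hexp : H.verts.card - r * M.card = (H.verts.card - 1 - r * M.card) + 1 := by omega
    rw [hvcard, hexp, pow_succ]
    ring
  rw [hnoncov]
  ring


@[simp] lemma verts_mk (V : Finset α) (E : Finset (Finset α)) :
    (⟨V, E⟩ : FinHypergraph α).verts = V := rfl

@[simp] lemma edges_mk (V : Finset α) (E : Finset (Finset α)) :
    (⟨V, E⟩ : FinHypergraph α).edges = E := rfl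

lemma removeVerts_mk (V : Finset α) (E : Finset (Finset α)) (S : Finset α) :
    (⟨V, E⟩ : FinHypergraph α).removeVerts S
      = ⟨V \ S, E.filter (fun e => Disjoint e S)⟩ := rfl

lemma union_wf {H1 H2 : FinHypergraph α} (hwf1 : H1.WellFormed) (hwf2 : H2.WellFormed) :
    FinHypergraph.WellFormed ⟨H1.verts ∪ H2.verts, H1.edges ∪ H2.edges⟩ := by
  intro e he a ha
  rcases Finset.mem_union.mp he with h | h
  · exact Finset.mem_union_left _ (hwf1 e h ha)
  · exact Finset.mem_union_right _ (hwf2 e h ha)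

lemma union_unif {H1 H2 : FinHypergraph α} {r : ℕ} (hu1 : H1.Uniform r) (hu2 : H2.Uniform r) :
    FinHypergraph.Uniform ⟨H1.verts ∪ H2.verts, H1.edges ∪ H2.edges⟩ r := by
  intro e he
  rcases Finset.mem_union.mp he with h | h
  · exact hu1 e h
  · exact hu2 e h

end ER

open ER

/-- Let `H1`, `H2` be vertex-disjoint `r`-uniform supertrees (`r ≥ 2`)
with distinguished vertices `v1 ∈ V(H1)`, `v2 ∈ V(H2)`. Let `T` be obtained from
`H1 ∪ H2` by adding a new edge consisting of `v1`, `v2` and `r−2` new vertices, and let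
`T'` be obtained from `H1 ∪ H2` by identifying `v1` and `v2` (coalescence) and adding a
pendant edge (the identified vertex together with `r−1` new vertices) there. Then
`φ(T,x) − φ(T',x)
  = x^(r−2)·( x·φ(H2−v2,x) − φ(H2,x) )·Σ_{e ∈ E_{v1}(H1)} φ(H1−V(e),x)`. -/
theorem matchPoly_edge_release {α : Type*} (r : ℕ) (hr : 2 ≤ r)
    (H1 H2 : FinHypergraph α) (h1 : H1.IsSupertree r) (h2 : H2.IsSupertree r)
    (hdisj : Disjoint H1.verts H2.verts)
    (v1 v2 : α) (hv1 : v1 ∈ H1.verts) (hv2 : v2 ∈ H2.verts)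
    (f g : Finset α) (hfcard : f.card = r - 2) (hgcard : g.card = r - 1)
    (hf : Disjoint f (H1.verts ∪ H2.verts)) (hg : Disjoint g (H1.verts ∪ H2.verts))
    (T T' : FinHypergraph α)
    (hT : T = ⟨H1.verts ∪ H2.verts ∪ f,
      insert (insert v1 (insert v2 f)) (H1.edges ∪ H2.edges)⟩)
    (hT' : T' = ⟨(H1.verts ∪ H2.verts.erase v2) ∪ g,
      insert (insert v1 g)
        (H1.edges ∪ H2.edges.image (fun e => if v2 ∈ e then insert v1 (e.erase v2) else e))⟩) :
    ∀ x : ℝ, T.matchPoly r x - T'.matchPoly r x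
      = x ^ (r - 2) *
          (x * (H2.removeVerts {v2}).matchPoly r x - H2.matchPoly r x) *
          ∑ e ∈ H1.edges.filter (fun e => v1 ∈ e), (H1.removeVerts e).matchPoly r x := by
  intro x
  obtain ⟨E2p, hE2p⟩ : ∃ E, H2.edges.image
      (fun e => if v2 ∈ e then insert v1 (e.erase v2) else e) = E := ⟨_, rfl⟩
  rw [hE2p] at hT'
  subst hT hT'
  obtain ⟨hwf1, hu1, -, -⟩ := h1
  obtain ⟨hwf2, hu2, -, -⟩ := h2
  have hr1 : 1 ≤ r := by omega
  -- pointwise facts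
  have h12 : ∀ a ∈ H1.verts, a ∉ H2.verts := fun a ha hc => Finset.disjoint_left.mp hdisj ha hc
  have hfV : ∀ a ∈ f, a ∉ H1.verts ∧ a ∉ H2.verts := fun a ha =>
    ⟨fun hc => Finset.disjoint_left.mp hf ha (Finset.mem_union_left _ hc),
     fun hc => Finset.disjoint_left.mp hf ha (Finset.mem_union_right _ hc)⟩
  have hgV : ∀ a ∈ g, a ∉ H1.verts ∧ a ∉ H2.verts := fun a ha =>
    ⟨fun hc => Finset.disjoint_left.mp hg ha (Finset.mem_union_left _ hc),
     fun hc => Finset.disjoint_left.mp hg ha (Finset.mem_union_right _ hc)⟩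
  have hv1v2 : v1 ≠ v2 := fun h => h12 v1 hv1 (by rw [h]; exact hv2)
  have hv1f : v1 ∉ f := fun h => (hfV v1 h).1 hv1
  have hv2f : v2 ∉ f := fun h => (hfV v2 h).2 hv2
  have hv1g : v1 ∉ g := fun h => (hgV v1 h).1 hv1
  have hv1V2 : v1 ∉ H2.verts := h12 v1 hv1
  have hsubE1 : ∀ e ∈ H1.edges, e ⊆ H1.verts := hwf1
  have hsubE2 : ∀ e ∈ H2.edges, e ⊆ H2.verts := hwf2
  -- edge e0
  have hv1e0' : v1 ∉ insert v2 f := by simp [hv1v2, hv1f]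
  have he0card : (insert v1 (insert v2 f)).card = r := by
    rw [Finset.card_insert_of_notMem hv1e0', Finset.card_insert_of_notMem hv2f, hfcard]
    omega
  -- T wellformed/uniform
  have hTwf : FinHypergraph.WellFormed ⟨H1.verts ∪ H2.verts ∪ f,
      insert (insert v1 (insert v2 f)) (H1.edges ∪ H2.edges)⟩ := by
    intro e he
    rcases Finset.mem_insert.mp he with rfl | he
    · intro a ha
      rcases Finset.mem_insert.mp ha with rfl | ha
      · exact Finset.mem_union_left _ (Finset.mem_union_left _ hv1)
      rcases Finset.mem_insert.mp ha with rfl | ha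
      · exact Finset.mem_union_left _ (Finset.mem_union_right _ hv2)
      · exact Finset.mem_union_right _ ha
    · intro a ha
      rcases Finset.mem_union.mp he with h | h
      · exact Finset.mem_union_left _ (Finset.mem_union_left _ (hwf1 e h ha))
      · exact Finset.mem_union_left _ (Finset.mem_union_right _ (hwf2 e h ha))
  have hTu : FinHypergraph.Uniform ⟨H1.verts ∪ H2.verts ∪ f,
      insert (insert v1 (insert v2 f)) (H1.edges ∪ H2.edges)⟩ r := by
    intro e he
    rcases Finset.mem_insert.mp he with rfl | he
    · exact he0card
    · rcases Finset.mem_union.mp he with h | h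
      exacts [hu1 e h, hu2 e h]
  have he0new : insert v1 (insert v2 f) ∉ H1.edges ∪ H2.edges := by
    intro hc
    rcases Finset.mem_union.mp hc with h | h
    · exact h12 v2 (hwf1 _ h (by simp)) hv2
    · exact hv1V2 (hwf2 _ h (by simp))
  -- phi T
  have eqT := edge_delete ⟨H1.verts ∪ H2.verts ∪ f,
      insert (insert v1 (insert v2 f)) (H1.edges ∪ H2.edges)⟩ r hr1 hTwf hTu
      (insert v1 (insert v2 f)) (Finset.mem_insert_self _ _) x
  have hgr1 : (⟨(⟨H1.verts ∪ H2.verts ∪ f,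
      insert (insert v1 (insert v2 f)) (H1.edges ∪ H2.edges)⟩ : FinHypergraph α).verts,
      (⟨H1.verts ∪ H2.verts ∪ f,
      insert (insert v1 (insert v2 f)) (H1.edges ∪ H2.edges)⟩ : FinHypergraph α).edges.erase
        (insert v1 (insert v2 f))⟩ : FinHypergraph α)
      = ⟨H1.verts ∪ H2.verts ∪ f, H1.edges ∪ H2.edges⟩ := by
    exact hg_ext rfl (by simp only [edges_mk]; exact Finset.erase_insert he0new)
  have hgr2 : (⟨H1.verts ∪ H2.verts ∪ f,
      insert (insert v1 (insert v2 f)) (H1.edges ∪ H2.edges)⟩ : FinHypergraph α).removeVerts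
        (insert v1 (insert v2 f))
      = ⟨(H1.removeVerts {v1}).verts ∪ (H2.removeVerts {v2}).verts,
         (H1.removeVerts {v1}).edges ∪ (H2.removeVerts {v2}).edges⟩ := by
    rw [removeVerts_mk]
    apply hg_ext
    · show (H1.verts ∪ H2.verts ∪ f) \ insert v1 (insert v2 f)
        = (H1.verts \ {v1}) ∪ (H2.verts \ {v2})
      ext a
      simp only [Finset.mem_sdiff, Finset.mem_union, Finset.mem_insert, Finset.mem_singleton,
        not_or]
      constructor
      · rintro ⟨(ha | ha) | ha, hne1, hne2, hnf⟩
        · exact Or.inl ⟨ha, hne1⟩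
        · exact Or.inr ⟨ha, hne2⟩
        · exact absurd ha hnf
      · rintro (⟨ha, hne⟩ | ⟨ha, hne⟩)
        · exact ⟨Or.inl (Or.inl ha), hne, fun h => h12 a ha (by rw [h]; exact hv2),
            fun h => (hfV a h).1 ha⟩
        · exact ⟨Or.inl (Or.inr ha), fun h => h12 a (by rw [h]; exact hv1) ha, hne,
            fun h => (hfV a h).2 ha⟩
    · show (insert (insert v1 (insert v2 f)) (H1.edges ∪ H2.edges)).filter
          (fun e => Disjoint e (insert v1 (insert v2 f)))
        = (H1.removeVerts {v1}).edges ∪ (H2.removeVerts {v2}).edges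
      ext e
      simp only [Finset.mem_filter, Finset.mem_insert, Finset.mem_union, removeVerts]
      constructor
      · rintro ⟨rfl | (he | he), hde⟩
        · exact absurd hde (fun hd =>
            Finset.disjoint_left.mp hd (Finset.mem_insert_self _ _) (Finset.mem_insert_self _ _))
        · left
          refine ⟨he, Finset.disjoint_singleton_right.mpr fun hc => ?_⟩
          exact Finset.disjoint_left.mp hde hc (Finset.mem_insert_self _ _)
        · right
          refine ⟨he, Finset.disjoint_singleton_right.mpr fun hc => ?_⟩
          exact Finset.disjoint_left.mp hde hc
            (Finset.mem_insert_of_mem (Finset.mem_insert_self _ _))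
      · rintro (⟨he, hnv⟩ | ⟨he, hnv⟩)
        · refine ⟨Or.inr (Or.inl he), Finset.disjoint_left.mpr fun a hae hc => ?_⟩
          rcases Finset.mem_insert.mp hc with rfl | hc
          · exact Finset.disjoint_singleton_right.mp hnv hae
          rcases Finset.mem_insert.mp hc with rfl | hc
          · exact h12 a (hwf1 e he hae) hv2
          · exact (hfV a hc).1 (hwf1 e he hae)
        · refine ⟨Or.inr (Or.inr he), Finset.disjoint_left.mpr fun a hae hc => ?_⟩
          rcases Finset.mem_insert.mp hc with rfl | hc
          · exact hv1V2 (hwf2 e he hae)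
          rcases Finset.mem_insert.mp hc with rfl | hc
          · exact Finset.disjoint_singleton_right.mp hnv hae
          · exact (hfV a hc).2 (hwf2 e he hae)
  rw [hgr1, hgr2] at eqT
  have hDdisj : Disjoint (H1.removeVerts {v1}).verts (H2.removeVerts {v2}).verts :=
    Finset.disjoint_of_subset_left (Finset.sdiff_subset)
      (Finset.disjoint_of_subset_right (Finset.sdiff_subset) hdisj)
  have hUD := union_prod (H1.removeVerts {v1}) (H2.removeVerts {v2}) r hr1
    (rv_wf hwf1 {v1}) (rv_unif hu1 {v1}) (rv_wf hwf2 {v2}) (rv_unif hu2 {v2}) hDdisj x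
  rw [hUD] at eqT
  have hIso : FinHypergraph.matchPoly ⟨H1.verts ∪ H2.verts ∪ f, H1.edges ∪ H2.edges⟩ r x
      = x ^ f.card * (H1.matchPoly r x * H2.matchPoly r x) := by
    have hi := isolated ⟨H1.verts ∪ H2.verts, H1.edges ∪ H2.edges⟩ r hr1
      (union_wf hwf1 hwf2) (union_unif hu1 hu2) f hf x
    rw [union_prod H1 H2 r hr1 hwf1 hu1 hwf2 hu2 hdisj x] at hi
    exact hi
  rw [hIso] at eqT
  -- now T'
  have hgne : g.Nonempty := by rw [← Finset.card_pos, hgcard]; omega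
  have he1card : (insert v1 g).card = r := by
    rw [Finset.card_insert_of_notMem hv1g, hgcard]
    omega
  have hE2sub : ∀ e ∈ E2p,
      e ⊆ insert v1 (H2.verts.erase v2) := by
    intro e he
    rw [← hE2p] at he
    obtain ⟨d, hd, rfl⟩ := Finset.mem_image.mp he
    by_cases hv2d : v2 ∈ d
    · rw [if_pos hv2d]
      intro a ha
      rcases Finset.mem_insert.mp ha with rfl | ha
      · exact Finset.mem_insert_self _ _
      · exact Finset.mem_insert_of_mem (Finset.mem_erase.mpr
          ⟨(Finset.mem_erase.mp ha).1, hwf2 d hd (Finset.mem_erase.mp ha).2⟩)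
    · rw [if_neg hv2d]
      intro a ha
      exact Finset.mem_insert_of_mem (Finset.mem_erase.mpr
        ⟨fun h => hv2d (h ▸ ha), hwf2 d hd ha⟩)
  have hE2card : ∀ e ∈ E2p,
      e.card = r := by
    intro e he
    rw [← hE2p] at he
    obtain ⟨d, hd, rfl⟩ := Finset.mem_image.mp he
    by_cases hv2d : v2 ∈ d
    · rw [if_pos hv2d]
      have hv1nd : v1 ∉ d.erase v2 := fun h => hv1V2 (hwf2 d hd (Finset.mem_erase.mp h).2)
      rw [Finset.card_insert_of_notMem hv1nd, Finset.card_erase_of_mem hv2d, hu2 d hd]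
      omega
    · rw [if_neg hv2d]
      exact hu2 d hd
  have hT'wf : FinHypergraph.WellFormed ⟨(H1.verts ∪ H2.verts.erase v2) ∪ g,
      insert (insert v1 g) (H1.edges ∪
        E2p)⟩ := by
    intro e he
    rcases Finset.mem_insert.mp he with rfl | he
    · intro a ha
      rcases Finset.mem_insert.mp ha with rfl | ha
      · exact Finset.mem_union_left _ (Finset.mem_union_left _ hv1)
      · exact Finset.mem_union_right _ ha
    · rcases Finset.mem_union.mp he with h | h
      · intro a ha
        exact Finset.mem_union_left _ (Finset.mem_union_left _ (hwf1 e h ha))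
      · intro a ha
        rcases Finset.mem_insert.mp (hE2sub e h ha) with rfl | h'
        · exact Finset.mem_union_left _ (Finset.mem_union_left _ hv1)
        · exact Finset.mem_union_left _ (Finset.mem_union_right _ h')
  have hT'u : FinHypergraph.Uniform ⟨(H1.verts ∪ H2.verts.erase v2) ∪ g,
      insert (insert v1 g) (H1.edges ∪
        E2p)⟩ r := by
    intro e he
    rcases Finset.mem_insert.mp he with rfl | he
    · exact he1card
    · rcases Finset.mem_union.mp he with h | h
      exacts [hu1 e h, hE2card e h]
  have he1new : insert v1 g ∉ H1.edges ∪
      E2p := by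
    obtain ⟨a, hag⟩ := hgne
    have hae1 : a ∈ insert v1 g := Finset.mem_insert_of_mem hag
    intro hc
    rcases Finset.mem_union.mp hc with h | h
    · exact (hgV a hag).1 (hwf1 _ h hae1)
    · rcases Finset.mem_insert.mp (hE2sub _ h hae1) with rfl | h'
      · exact hv1g hag
      · exact (hgV a hag).2 (Finset.mem_erase.mp h').2
  have eqT' := edge_delete ⟨(H1.verts ∪ H2.verts.erase v2) ∪ g,
      insert (insert v1 g) (H1.edges ∪
        E2p)⟩ r hr1
      hT'wf hT'u (insert v1 g) (Finset.mem_insert_self _ _) x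
  have hgr3 : (⟨(⟨(H1.verts ∪ H2.verts.erase v2) ∪ g,
      insert (insert v1 g) (H1.edges ∪
        E2p)⟩ :
          FinHypergraph α).verts,
      (⟨(H1.verts ∪ H2.verts.erase v2) ∪ g,
      insert (insert v1 g) (H1.edges ∪
        E2p)⟩ :
          FinHypergraph α).edges.erase (insert v1 g)⟩ : FinHypergraph α)
      = ⟨(H1.verts ∪ H2.verts.erase v2) ∪ g, H1.edges ∪
          E2p⟩ := by
    exact hg_ext rfl (by simp only [edges_mk]; exact Finset.erase_insert he1new)
  rw [hgr3] at eqT'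
  -- strip g, get G
  have hGwf : FinHypergraph.WellFormed ⟨H1.verts ∪ H2.verts.erase v2, H1.edges ∪ E2p⟩ := by
    intro e he
    rcases Finset.mem_union.mp he with h | h
    · intro a ha; exact Finset.mem_union_left _ (hwf1 e h ha)
    · intro a ha
      rcases Finset.mem_insert.mp (hE2sub e h ha) with rfl | h'
      · exact Finset.mem_union_left _ hv1
      · exact Finset.mem_union_right _ h'
  have hGu : FinHypergraph.Uniform ⟨H1.verts ∪ H2.verts.erase v2, H1.edges ∪ E2p⟩ r := by
    intro e he
    rcases Finset.mem_union.mp he with h | h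
    exacts [hu1 e h, hE2card e h]
  have hgdisj : Disjoint g (H1.verts ∪ H2.verts.erase v2) :=
    hg.mono_right (Finset.union_subset_union_right (Finset.erase_subset _ _))
  have hIso2 : FinHypergraph.matchPoly ⟨(H1.verts ∪ H2.verts.erase v2) ∪ g, H1.edges ∪ E2p⟩ r x
      = x ^ g.card * FinHypergraph.matchPoly ⟨H1.verts ∪ H2.verts.erase v2, H1.edges ∪ E2p⟩ r x :=
    isolated ⟨H1.verts ∪ H2.verts.erase v2, H1.edges ∪ E2p⟩ r hr1 hGwf hGu g hgdisj x
  rw [hIso2] at eqT'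
  have hgr4 : (⟨(H1.verts ∪ H2.verts.erase v2) ∪ g,
      insert (insert v1 g) (H1.edges ∪ E2p)⟩ : FinHypergraph α).removeVerts (insert v1 g)
      = ⟨(H1.removeVerts {v1}).verts ∪ (H2.removeVerts {v2}).verts,
         (H1.removeVerts {v1}).edges ∪ (H2.removeVerts {v2}).edges⟩ := by
    rw [removeVerts_mk]
    apply hg_ext
    · show ((H1.verts ∪ H2.verts.erase v2) ∪ g) \ insert v1 g
        = (H1.verts \ {v1}) ∪ (H2.verts \ {v2})
      ext a
      simp only [Finset.mem_sdiff, Finset.mem_union, Finset.mem_insert, Finset.mem_singleton,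
        Finset.mem_erase, not_or]
      constructor
      · rintro ⟨(ha | ⟨hane, ha⟩) | ha, hne1, hng⟩
        · exact Or.inl ⟨ha, hne1⟩
        · exact Or.inr ⟨ha, hane⟩
        · exact absurd ha hng
      · rintro (⟨ha, hne⟩ | ⟨ha, hne⟩)
        · exact ⟨Or.inl (Or.inl ha), hne, fun h => (hgV a h).1 ha⟩
        · exact ⟨Or.inl (Or.inr ⟨hne, ha⟩), fun h => hv1V2 (by rw [← h]; exact ha),
            fun h => (hgV a h).2 ha⟩
    · show (insert (insert v1 g) (H1.edges ∪ E2p)).filter (fun e => Disjoint e (insert v1 g))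
        = (H1.removeVerts {v1}).edges ∪ (H2.removeVerts {v2}).edges
      ext e
      simp only [Finset.mem_filter, Finset.mem_insert, Finset.mem_union, removeVerts]
      constructor
      · rintro ⟨rfl | (he | he), hde⟩
        · exact absurd hde (fun hd => Finset.disjoint_left.mp hd
            (Finset.mem_insert_self _ _) (Finset.mem_insert_self _ _))
        · left
          refine ⟨he, Finset.disjoint_singleton_right.mpr fun hc => ?_⟩
          exact Finset.disjoint_left.mp hde hc (Finset.mem_insert_self _ _)
        · right
          rw [← hE2p] at he
          obtain ⟨d, hd, rfl⟩ := Finset.mem_image.mp he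
          by_cases hv2d : v2 ∈ d
          · rw [if_pos hv2d] at hde
            exact (Finset.disjoint_left.mp hde (Finset.mem_insert_self _ _)
              (Finset.mem_insert_self _ _)).elim
          · rw [if_neg hv2d] at hde ⊢
            exact ⟨hd, Finset.disjoint_singleton_right.mpr hv2d⟩
      · rintro (⟨he, hnv⟩ | ⟨he, hnv⟩)
        · refine ⟨Or.inr (Or.inl he), Finset.disjoint_left.mpr fun a hae hc => ?_⟩
          rcases Finset.mem_insert.mp hc with rfl | hc
          · exact Finset.disjoint_singleton_right.mp hnv hae
          · exact (hgV a hc).1 (hwf1 e he hae)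
        · have hv2e : v2 ∉ e := Finset.disjoint_singleton_right.mp hnv
          refine ⟨Or.inr (Or.inr ?_), Finset.disjoint_left.mpr fun a hae hc => ?_⟩
          · rw [← hE2p]
            exact Finset.mem_image.mpr ⟨e, he, if_neg hv2e⟩
          · rcases Finset.mem_insert.mp hc with rfl | hc
            · exact hv1V2 (hwf2 e he hae)
            · exact (hgV a hc).2 (hwf2 e he hae)
  rw [hgr4, hUD] at eqT'
  -- vertex deletion in G at v1
  have hv1G : v1 ∈ (⟨H1.verts ∪ H2.verts.erase v2, H1.edges ∪ E2p⟩ : FinHypergraph α).verts :=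
    Finset.mem_union_left _ hv1
  have eqG := vertex_delete ⟨H1.verts ∪ H2.verts.erase v2, H1.edges ∪ E2p⟩ r hr1 hGwf hGu
    v1 hv1G x
  have hgr5 : (⟨H1.verts ∪ H2.verts.erase v2, H1.edges ∪ E2p⟩ : FinHypergraph α).removeVerts {v1}
      = ⟨(H1.removeVerts {v1}).verts ∪ (H2.removeVerts {v2}).verts,
         (H1.removeVerts {v1}).edges ∪ (H2.removeVerts {v2}).edges⟩ := by
    rw [removeVerts_mk]
    apply hg_ext
    · show (H1.verts ∪ H2.verts.erase v2) \ {v1} = (H1.verts \ {v1}) ∪ (H2.verts \ {v2})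
      ext a
      simp only [Finset.mem_sdiff, Finset.mem_union, Finset.mem_singleton, Finset.mem_erase]
      constructor
      · rintro ⟨ha | ⟨hane, ha⟩, hne⟩
        · exact Or.inl ⟨ha, hne⟩
        · exact Or.inr ⟨ha, hane⟩
      · rintro (⟨ha, hne⟩ | ⟨ha, hne⟩)
        · exact ⟨Or.inl ha, hne⟩
        · exact ⟨Or.inr ⟨hne, ha⟩, fun h => hv1V2 (by rw [← h]; exact ha)⟩
    · show (H1.edges ∪ E2p).filter (fun e => Disjoint e {v1})
        = (H1.removeVerts {v1}).edges ∪ (H2.removeVerts {v2}).edges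
      ext e
      simp only [Finset.mem_filter, Finset.mem_union, removeVerts]
      constructor
      · rintro ⟨he | he, hde⟩
        · exact Or.inl ⟨he, hde⟩
        · right
          rw [← hE2p] at he
          obtain ⟨d, hd, rfl⟩ := Finset.mem_image.mp he
          by_cases hv2d : v2 ∈ d
          · rw [if_pos hv2d] at hde
            exact (Finset.disjoint_singleton_right.mp hde (Finset.mem_insert_self _ _)).elim
          · rw [if_neg hv2d] at hde ⊢
            exact ⟨hd, Finset.disjoint_singleton_right.mpr hv2d⟩
      · rintro (⟨he, hde⟩ | ⟨he, hde⟩)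
        · exact ⟨Or.inl he, hde⟩
        · have hv2e : v2 ∉ e := Finset.disjoint_singleton_right.mp hde
          refine ⟨Or.inr ?_, Finset.disjoint_singleton_right.mpr
            fun hc => hv1V2 (hwf2 e he hc)⟩
          rw [← hE2p]
          exact Finset.mem_image.mpr ⟨e, he, if_neg hv2e⟩
  rw [hgr5, hUD] at eqG
  simp only [edges_mk] at eqG
  -- split the sum over edges at v1 in G
  have hfilter : (H1.edges ∪ E2p).filter (fun e => v1 ∈ e)
      = (H1.edges.filter (fun e => v1 ∈ e))
        ∪ (H2.edges.filter (fun e => v2 ∈ e)).image (fun e => insert v1 (e.erase v2)) := by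
    ext e
    simp only [Finset.mem_filter, Finset.mem_union, Finset.mem_image]
    constructor
    · rintro ⟨he | he, hv1e⟩
      · exact Or.inl ⟨he, hv1e⟩
      · right
        rw [← hE2p] at he
        obtain ⟨d, hd, rfl⟩ := Finset.mem_image.mp he
        by_cases hv2d : v2 ∈ d
        · exact ⟨d, ⟨hd, hv2d⟩, (if_pos hv2d).symm ▸ rfl⟩
        · rw [if_neg hv2d] at hv1e
          exact absurd (hwf2 d hd hv1e) hv1V2
    · rintro (⟨he, hv1e⟩ | ⟨d, ⟨hd, hv2d⟩, rfl⟩)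
      · exact ⟨Or.inl he, hv1e⟩
      · refine ⟨Or.inr ?_, Finset.mem_insert_self _ _⟩
        rw [← hE2p]
        exact Finset.mem_image.mpr ⟨d, hd, if_pos hv2d⟩
  have hdisjSum : Disjoint (H1.edges.filter (fun e => v1 ∈ e))
      ((H2.edges.filter (fun e => v2 ∈ e)).image (fun e => insert v1 (e.erase v2))) := by
    rw [Finset.disjoint_left]
    rintro e he hc
    obtain ⟨d, hd, rfl⟩ := Finset.mem_image.mp hc
    rw [Finset.mem_filter] at he hd
    have hdcard : (d.erase v2).card = r - 1 := by
      rw [Finset.card_erase_of_mem hd.2, hu2 d hd.1]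
    have hdne : (d.erase v2).Nonempty := by rw [← Finset.card_pos, hdcard]; omega
    obtain ⟨a, ha⟩ := hdne
    have haV2 : a ∈ H2.verts := hwf2 d hd.1 (Finset.mem_of_mem_erase ha)
    have haV1 : a ∈ H1.verts := hwf1 _ he.1 (Finset.mem_insert_of_mem ha)
    exact h12 a haV1 haV2
  rw [hfilter, Finset.sum_union hdisjSum] at eqG
  have hinj : ∀ d1 ∈ H2.edges.filter (fun e => v2 ∈ e), ∀ d2 ∈ H2.edges.filter (fun e => v2 ∈ e),
      insert v1 (d1.erase v2) = insert v1 (d2.erase v2) → d1 = d2 := by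
    intro d1 hd1 d2 hd2 hEq
    rw [Finset.mem_filter] at hd1 hd2
    have h1' : v1 ∉ d1.erase v2 := fun h => hv1V2 (hwf2 d1 hd1.1 (Finset.mem_of_mem_erase h))
    have h2' : v1 ∉ d2.erase v2 := fun h => hv1V2 (hwf2 d2 hd2.1 (Finset.mem_of_mem_erase h))
    have hEq2 : d1.erase v2 = d2.erase v2 := by
      have := congrArg (fun s => Finset.erase s v1) hEq
      simpa [Finset.erase_insert h1', Finset.erase_insert h2'] using this
    calc d1 = insert v2 (d1.erase v2) := (Finset.insert_erase hd1.2).symm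
    _ = insert v2 (d2.erase v2) := by rw [hEq2]
    _ = d2 := Finset.insert_erase hd2.2
  rw [Finset.sum_image hinj] at eqG
  -- per-term identities
  have hterm1 : ∀ e ∈ H1.edges.filter (fun e => v1 ∈ e),
      FinHypergraph.matchPoly
        ((⟨H1.verts ∪ H2.verts.erase v2, H1.edges ∪ E2p⟩ : FinHypergraph α).removeVerts e) r x
      = (H1.removeVerts e).matchPoly r x * (H2.removeVerts {v2}).matchPoly r x := by
    intro e he
    rw [Finset.mem_filter] at he
    have hesub := hwf1 e he.1
    have hgrA : (⟨H1.verts ∪ H2.verts.erase v2, H1.edges ∪ E2p⟩ : FinHypergraph α).removeVerts e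
        = ⟨(H1.removeVerts e).verts ∪ (H2.removeVerts {v2}).verts,
           (H1.removeVerts e).edges ∪ (H2.removeVerts {v2}).edges⟩ := by
      rw [removeVerts_mk]
      apply hg_ext
      · show (H1.verts ∪ H2.verts.erase v2) \ e = (H1.verts \ e) ∪ (H2.verts \ {v2})
        ext a
        simp only [Finset.mem_sdiff, Finset.mem_union, Finset.mem_erase, Finset.mem_singleton]
        constructor
        · rintro ⟨ha | ⟨hane, ha⟩, hne⟩
          · exact Or.inl ⟨ha, hne⟩
          · exact Or.inr ⟨ha, hane⟩
        · rintro (⟨ha, hne⟩ | ⟨ha, hne⟩)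
          · exact ⟨Or.inl ha, hne⟩
          · exact ⟨Or.inr ⟨hne, ha⟩, fun h => h12 a (hesub h) ha⟩
      · show (H1.edges ∪ E2p).filter (fun d => Disjoint d e)
          = (H1.removeVerts e).edges ∪ (H2.removeVerts {v2}).edges
        ext d
        simp only [Finset.mem_filter, Finset.mem_union, removeVerts]
        constructor
        · rintro ⟨hd | hd, hde⟩
          · exact Or.inl ⟨hd, hde⟩
          · right
            rw [← hE2p] at hd
            obtain ⟨c, hc, rfl⟩ := Finset.mem_image.mp hd
            by_cases hv2c : v2 ∈ c
            · rw [if_pos hv2c] at hde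
              exact (Finset.disjoint_left.mp hde (Finset.mem_insert_self _ _) he.2).elim
            · rw [if_neg hv2c] at hde ⊢
              exact ⟨hc, Finset.disjoint_singleton_right.mpr hv2c⟩
        · rintro (⟨hd, hde⟩ | ⟨hd, hde⟩)
          · exact ⟨Or.inl hd, hde⟩
          · have hv2d : v2 ∉ d := Finset.disjoint_singleton_right.mp hde
            refine ⟨Or.inr (by rw [← hE2p]; exact Finset.mem_image.mpr ⟨d, hd, if_neg hv2d⟩),
              Finset.disjoint_left.mpr fun a had hae => h12 a (hwf1 e he.1 hae) (hwf2 d hd had)⟩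
    rw [hgrA]
    exact union_prod (H1.removeVerts e) (H2.removeVerts {v2}) r hr1
      (rv_wf hwf1 e) (rv_unif hu1 e) (rv_wf hwf2 {v2}) (rv_unif hu2 {v2})
      (Finset.disjoint_of_subset_left Finset.sdiff_subset
        (Finset.disjoint_of_subset_right Finset.sdiff_subset hdisj)) x
  have hterm2 : ∀ d ∈ H2.edges.filter (fun e => v2 ∈ e),
      FinHypergraph.matchPoly
        ((⟨H1.verts ∪ H2.verts.erase v2, H1.edges ∪ E2p⟩ : FinHypergraph α).removeVerts
          (insert v1 (d.erase v2))) r x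
      = (H1.removeVerts {v1}).matchPoly r x * (H2.removeVerts d).matchPoly r x := by
    intro d hd
    rw [Finset.mem_filter] at hd
    have hdsub := hwf2 d hd.1
    have hgrB : (⟨H1.verts ∪ H2.verts.erase v2, H1.edges ∪ E2p⟩ : FinHypergraph α).removeVerts
          (insert v1 (d.erase v2))
        = ⟨(H1.removeVerts {v1}).verts ∪ (H2.removeVerts d).verts,
           (H1.removeVerts {v1}).edges ∪ (H2.removeVerts d).edges⟩ := by
      rw [removeVerts_mk]
      apply hg_ext
      · show (H1.verts ∪ H2.verts.erase v2) \ insert v1 (d.erase v2)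
          = (H1.verts \ {v1}) ∪ (H2.verts \ d)
        ext a
        simp only [Finset.mem_sdiff, Finset.mem_union, Finset.mem_erase, Finset.mem_singleton,
          Finset.mem_insert, not_or]
        constructor
        · rintro ⟨ha | ⟨hane, ha⟩, hnv1, hnd⟩
          · exact Or.inl ⟨ha, hnv1⟩
          · exact Or.inr ⟨ha, fun hc => hnd ⟨hane, hc⟩⟩
        · rintro (⟨ha, hne⟩ | ⟨ha, hnd⟩)
          · exact ⟨Or.inl ha, hne, fun hc => h12 a ha (hdsub hc.2)⟩
          · refine ⟨Or.inr ⟨fun h => hnd (by rw [h]; exact hd.2), ha⟩,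
              fun h => hv1V2 (by rw [← h]; exact ha),
              fun hc => hnd hc.2⟩
      · show (H1.edges ∪ E2p).filter (fun c => Disjoint c (insert v1 (d.erase v2)))
          = (H1.removeVerts {v1}).edges ∪ (H2.removeVerts d).edges
        ext c
        simp only [Finset.mem_filter, Finset.mem_union, removeVerts]
        constructor
        · rintro ⟨hc | hc, hdc⟩
          · refine Or.inl ⟨hc, Finset.disjoint_singleton_right.mpr fun h => ?_⟩
            exact Finset.disjoint_left.mp hdc h (Finset.mem_insert_self _ _)
          · right
            rw [← hE2p] at hc
            obtain ⟨c', hc', rfl⟩ := Finset.mem_image.mp hc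
            by_cases hv2c : v2 ∈ c'
            · rw [if_pos hv2c] at hdc
              exact (Finset.disjoint_left.mp hdc (Finset.mem_insert_self _ _)
                (Finset.mem_insert_self _ _)).elim
            · rw [if_neg hv2c] at hdc ⊢
              refine ⟨hc', Finset.disjoint_left.mpr fun a hac had => ?_⟩
              by_cases hav2 : a = v2
              · exact hv2c (hav2 ▸ hac)
              · exact Finset.disjoint_left.mp hdc hac
                  (Finset.mem_insert_of_mem (Finset.mem_erase.mpr ⟨hav2, had⟩))
        · rintro (⟨hc, hdc⟩ | ⟨hc, hdc⟩)
          · refine ⟨Or.inl hc, Finset.disjoint_left.mpr fun a hac h => ?_⟩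
            rcases Finset.mem_insert.mp h with rfl | h
            · exact Finset.disjoint_singleton_right.mp hdc hac
            · exact h12 a (hwf1 c hc hac) (hdsub (Finset.mem_of_mem_erase h))
          · have hv2c : v2 ∉ c := fun h => Finset.disjoint_left.mp hdc h hd.2
            refine ⟨Or.inr (by rw [← hE2p]; exact Finset.mem_image.mpr ⟨c, hc, if_neg hv2c⟩),
              Finset.disjoint_left.mpr fun a hac h => ?_⟩
            rcases Finset.mem_insert.mp h with rfl | h
            · exact hv1V2 (hwf2 c hc hac)
            · exact Finset.disjoint_left.mp hdc hac (Finset.mem_of_mem_erase h)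
    rw [hgrB]
    exact union_prod (H1.removeVerts {v1}) (H2.removeVerts d) r hr1
      (rv_wf hwf1 {v1}) (rv_unif hu1 {v1}) (rv_wf hwf2 d) (rv_unif hu2 d)
      (Finset.disjoint_of_subset_left Finset.sdiff_subset
        (Finset.disjoint_of_subset_right Finset.sdiff_subset hdisj)) x
  rw [Finset.sum_congr rfl hterm1, Finset.sum_congr rfl hterm2,
    ← Finset.sum_mul, ← Finset.mul_sum] at eqG
  -- vertex recurrences in H1 and H2
  have eqH1 := vertex_delete H1 r hr1 hwf1 hu1 v1 hv1 x
  have eqH2 := vertex_delete H2 r hr1 hwf2 hu2 v2 hv2 x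
  -- final algebra
  obtain ⟨s, rfl⟩ : ∃ s, r = s + 2 := ⟨r - 2, by omega⟩
  have hfc : f.card = s := by omega
  have hgc : g.card = s + 1 := by omega
  rw [hfc] at eqT
  rw [hgc] at eqT'
  have hrs : s + 2 - 2 = s := by omega
  rw [hrs, eqT, eqT', eqG, eqH1, eqH2]
  ring
end
end

section
/- Let r ≥ 3, d ≥ 3, let H be an r-uniform supertree with a vertex u, and let 2 ≤ i ≤ d. Let P_d^r(v_i,u)H be the hypergraph obtained from the disjoint union of the loose path P_d^r and H by identifying the joint vertex v_i of the path with the vertex u of H. Then φ(P_d^r(v_i,u)H, x) = φ(P_d^r, x)·φ(H−u, x) − x^{2r−4}·φ(P_{i−2}^r, x)·φ(P_{d−i}^r, x)·Σ_{e ∈ E_u(H)} φ(H − V(e), x), where the sum runs over all edges e of H containing u. -/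
open Classical

noncomputable section

namespace FinHypergraph

variable {α : Type*}

/-- The edges of the `r`-uniform loose path of length `p` along the vertex labelling `w`:
the `i`-th edge consists of the `r` vertices `w (i*(r-1)), …, w ((i+1)*(r-1))`, so that
consecutive edges share exactly one vertex. -/
def loosePathEdges (r p : ℕ) (w : ℕ → α) : Finset (Finset α) :=
  (Finset.range p).image (fun i => (Finset.Icc (i * (r - 1)) ((i + 1) * (r - 1))).image w)

/-- `P` is an `r`-uniform loose path with `m` edges (`P_m^r`); for `m = 0` it is a single
vertex with no edge. -/
def IsLoosePath (r m : ℕ) (P : FinHypergraph α) : Prop :=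
  ∃ w : ℕ → α, Set.InjOn w (Set.Iic (m * (r - 1))) ∧
    P.verts = (Finset.Icc 0 (m * (r - 1))).image w ∧
    P.edges = loosePathEdges r m w

/-- `T'` is obtained from the disjoint union of the loose path `P_d^r` and `H` by
identifying the path vertex with label `c` with the vertex `u` of `H` (all other path
vertices being new). -/
def IsPathIdentify (r d c : ℕ) (H : FinHypergraph α) (u : α) (T' : FinHypergraph α) : Prop :=
  ∃ w : ℕ → α, Set.InjOn w (Set.Iic (d * (r - 1))) ∧ w c = u ∧
    (∀ t, t ≤ d * (r - 1) → t ≠ c → w t ∉ H.verts) ∧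
    T'.verts = H.verts ∪ (Finset.Icc 0 (d * (r - 1))).image w ∧
    T'.edges = H.edges ∪ loosePathEdges r d w

-- my additions
noncomputable def matchings (H : FinHypergraph α) : Finset (Finset (Finset α)) :=
  H.edges.powerset.filter (fun M => IsMatchingSet M)

lemma mem_matchings {H : FinHypergraph α} {M : Finset (Finset α)} :
    M ∈ H.matchings ↔ M ⊆ H.edges ∧ IsMatchingSet M := by
  simp [matchings, Finset.mem_filter, Finset.mem_powerset]

lemma matching_card_bound {H : FinHypergraph α} {r : ℕ} (hwf : H.WellFormed)
    (hun : H.Uniform r) {M : Finset (Finset α)} (hM : M ∈ H.matchings) :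
    r * M.card ≤ H.verts.card := by
  classical
  rw [mem_matchings] at hM
  obtain ⟨hsub, hm⟩ := hM
  have hdisj : ∀ x ∈ M, ∀ y ∈ M, x ≠ y → Disjoint (id x) (id y) := by
    intro x hx y hy hxy; exact hm x hx y hy hxy
  have h1 : (M.biUnion id).card = ∑ e ∈ M, e.card := by
    rw [Finset.card_biUnion hdisj]; rfl
  have h2 : ∑ e ∈ M, e.card = r * M.card := by
    rw [Finset.sum_congr rfl (fun e he => hun e (hsub he))]
    simp [Finset.sum_const, Nat.mul_comm]
  have h3 : M.biUnion id ⊆ H.verts := by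
    intro v hv
    simp only [Finset.mem_biUnion, id] at hv
    obtain ⟨e, he, hve⟩ := hv
    exact hwf e (hsub he) hve
  calc r * M.card = (M.biUnion id).card := by rw [h1, h2]
    _ ≤ H.verts.card := Finset.card_le_card h3

lemma matchPoly_eq_sum {H : FinHypergraph α} {r : ℕ} (hr : 1 ≤ r) (hwf : H.WellFormed)
    (hun : H.Uniform r) (x : ℝ) :
    H.matchPoly r x
      = ∑ M ∈ H.matchings, (-1 : ℝ) ^ M.card * x ^ (H.verts.card - r * M.card) := by
  classical
  have hmaps : ∀ M ∈ H.matchings, M.card ∈ Finset.range (H.verts.card + 1) := by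
    intro M hM
    rw [Finset.mem_range, Nat.lt_succ_iff]
    calc M.card ≤ r * M.card := Nat.le_mul_of_pos_left _ hr
      _ ≤ H.verts.card := matching_card_bound hwf hun hM
  rw [← Finset.sum_fiberwise_of_maps_to hmaps
    (fun M => (-1 : ℝ) ^ M.card * x ^ (H.verts.card - r * M.card))]
  unfold matchPoly
  refine Finset.sum_congr rfl (fun k _ => ?_)
  have h1 : ∑ M ∈ H.matchings.filter (fun M => M.card = k),
      (-1:ℝ)^M.card * x ^ (H.verts.card - r*M.card)
      = (H.matchings.filter (fun M => M.card = k)).card •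
          ((-1:ℝ)^k * x ^ (H.verts.card - r*k)) := by
    rw [← Finset.sum_const]
    refine Finset.sum_congr rfl (fun M hM => ?_)
    rw [Finset.mem_filter] at hM
    rw [hM.2]
  rw [h1]
  have h2 : (H.matchings.filter (fun M => M.card = k)).card = H.matchCount k := by
    unfold matchings matchCount
    rw [Finset.filter_filter]
    congr 1
    exact Finset.filter_congr (fun M _ => by tauto)
  rw [h2, nsmul_eq_mul]
  ring


/-- subsets of `range p` with no two consecutive elements -/
noncomputable def NC (p : ℕ) : Finset (Finset ℕ) :=
  (Finset.range p).powerset.filter (fun S => ∀ a ∈ S, a + 1 ∉ S)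

lemma mem_NC {p : ℕ} {S : Finset ℕ} :
    S ∈ NC p ↔ S ⊆ Finset.range p ∧ ∀ a ∈ S, a + 1 ∉ S := by
  simp [NC, Finset.mem_filter, Finset.mem_powerset]

lemma NC_two_card {p : ℕ} {S : Finset ℕ} (h : S ∈ NC p) : 2 * S.card ≤ p + 1 := by
  classical
  rw [mem_NC] at h
  have hdisj : Disjoint S (S.image (· + 1)) := by
    rw [Finset.disjoint_right]
    intro a ha hb
    rw [Finset.mem_image] at ha
    obtain ⟨b, hb', rfl⟩ := ha
    exact h.2 b hb' hb
  have hsub : S ∪ S.image (· + 1) ⊆ Finset.range (p + 1) := by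
    intro a ha
    rw [Finset.mem_union] at ha
    rcases ha with ha | ha
    · have := h.1 ha; rw [Finset.mem_range] at *; omega
    · rw [Finset.mem_image] at ha
      obtain ⟨b, hb, rfl⟩ := ha
      have := h.1 hb; rw [Finset.mem_range] at *; omega
  have hcard : (S ∪ S.image (· + 1)).card = 2 * S.card := by
    rw [Finset.card_union_of_disjoint hdisj,
      Finset.card_image_of_injective _ (add_left_injective 1)]
    ring
  calc 2 * S.card = (S ∪ S.image (· + 1)).card := hcard.symm
    _ ≤ (Finset.range (p+1)).card := Finset.card_le_card hsub
    _ = p + 1 := Finset.card_range _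

lemma NC_card_bound {r p : ℕ} {S : Finset ℕ} (hr : 2 ≤ r) (h : S ∈ NC p) :
    r * S.card ≤ p * (r - 1) + 1 := by
  have h2 := NC_two_card h
  obtain ⟨s, rfl⟩ : ∃ s, r = s + 2 := ⟨r - 2, by omega⟩
  have hkp : S.card ≤ p := by omega
  have h1 : s * S.card ≤ s * p := Nat.mul_le_mul_left s hkp
  have : s + 2 - 1 = s + 1 := by omega
  rw [this]
  nlinarith

section PathEdges

/-- the `j`-th edge of a loose path labelled along `w` -/
noncomputable def pe (r : ℕ) (w : ℕ → α) (j : ℕ) : Finset α :=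
  (Finset.Icc (j * (r - 1)) ((j + 1) * (r - 1))).image w

variable {r m : ℕ} {w : ℕ → α}

lemma succ_mul_le (hj : j < m) (r1 : ℕ) : (j + 1) * r1 ≤ m * r1 :=
  Nat.mul_le_mul_right _ hj

lemma mem_pe_iff (hw : Set.InjOn w (Set.Iic (m * (r - 1)))) {j t : ℕ} (hj : j < m)
    (ht : t ≤ m * (r - 1)) :
    w t ∈ pe r w j ↔ j * (r - 1) ≤ t ∧ t ≤ (j + 1) * (r - 1) := by
  constructor
  · intro hmem
    rw [pe, Finset.mem_image] at hmem
    obtain ⟨s, hs, hws⟩ := hmem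
    rw [Finset.mem_Icc] at hs
    have hsle : s ≤ m * (r - 1) := le_trans hs.2 (succ_mul_le hj _)
    have := hw (Set.mem_Iic.2 hsle) (Set.mem_Iic.2 ht) hws
    omega
  · intro ⟨h1, h2⟩
    rw [pe, Finset.mem_image]
    exact ⟨t, Finset.mem_Icc.2 ⟨h1, h2⟩, rfl⟩

lemma pe_card (hr : 2 ≤ r) (hw : Set.InjOn w (Set.Iic (m * (r - 1)))) {j : ℕ} (hj : j < m) :
    (pe r w j).card = r := by
  rw [pe, Finset.card_image_of_injOn, Nat.card_Icc]
  · have h1 : (j + 1) * (r - 1) = j * (r - 1) + (r - 1) := by ring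
    set a := j * (r - 1) with ha
    omega
  · intro s hs t ht hst
    simp only [Finset.coe_Icc, Set.mem_Icc] at hs ht
    exact hw (Set.mem_Iic.2 (le_trans hs.2 (succ_mul_le hj _)))
      (Set.mem_Iic.2 (le_trans ht.2 (succ_mul_le hj _))) hst

lemma pe_inj (hr : 2 ≤ r) (hw : Set.InjOn w (Set.Iic (m * (r - 1)))) {j k : ℕ}
    (hj : j < m) (hk : k < m) (h : pe r w j = pe r w k) : j = k := by
  have hmemj : w (j * (r - 1)) ∈ pe r w j := by
    rw [mem_pe_iff hw hj (le_trans (Nat.mul_le_mul_right _ (le_of_lt hj)) le_rfl)]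
    constructor
    · exact le_rfl
    · exact Nat.mul_le_mul_right _ (by omega)
  rw [h, mem_pe_iff hw hk (le_trans (Nat.mul_le_mul_right _ (le_of_lt hj)) le_rfl)] at hmemj
  have hmemk : w (k * (r - 1)) ∈ pe r w k := by
    rw [mem_pe_iff hw hk (Nat.mul_le_mul_right _ (le_of_lt hk))]
    exact ⟨le_rfl, Nat.mul_le_mul_right _ (by omega)⟩
  rw [← h, mem_pe_iff hw hj (Nat.mul_le_mul_right _ (le_of_lt hk))] at hmemk
  have hr1 : 1 ≤ r - 1 := by omega
  nlinarith [hmemj.1, hmemk.1, hmemj.2, hmemk.2]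

lemma pe_disjoint (hw : Set.InjOn w (Set.Iic (m * (r - 1)))) {j k : ℕ}
    (hj : j < m) (hk : k < m) (hr : 2 ≤ r) (hsep : j + 1 < k) :
    Disjoint (pe r w j) (pe r w k) := by
  rw [Finset.disjoint_left]
  intro v hvj hvk
  rw [pe, Finset.mem_image] at hvj hvk
  obtain ⟨s, hs, rfl⟩ := hvj
  obtain ⟨t, ht, hwt⟩ := hvk
  rw [Finset.mem_Icc] at hs ht
  have hsle : s ≤ m * (r - 1) := le_trans hs.2 (succ_mul_le hj _)
  have htle : t ≤ m * (r - 1) := le_trans ht.2 (succ_mul_le hk _)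
  have heq := hw (Set.mem_Iic.2 htle) (Set.mem_Iic.2 hsle) hwt
  subst heq
  have h1 : (j + 1) * (r - 1) < k * (r - 1) :=
    Nat.mul_lt_mul_of_lt_of_le hsep le_rfl (by omega)
  omega

lemma pe_not_disjoint (hw : Set.InjOn w (Set.Iic (m * (r - 1)))) {j : ℕ}
    (hj : j + 1 < m) (hr : 2 ≤ r) :
    ¬ Disjoint (pe r w j) (pe r w (j + 1)) := by
  rw [Finset.not_disjoint_iff]
  refine ⟨w ((j + 1) * (r - 1)), ?_, ?_⟩
  · rw [pe, Finset.mem_image]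
    exact ⟨(j+1)*(r-1), Finset.mem_Icc.2 ⟨Nat.mul_le_mul_right _ (by omega), le_rfl⟩, rfl⟩
  · rw [pe, Finset.mem_image]
    exact ⟨(j+1)*(r-1), Finset.mem_Icc.2 ⟨le_rfl, Nat.mul_le_mul_right _ (by omega)⟩, rfl⟩

lemma pe_subset (hj : j < m) : pe r w j ⊆ (Finset.Icc 0 (m * (r - 1))).image w := by
  rw [pe]
  apply Finset.image_subset_image
  intro t ht
  rw [Finset.mem_Icc] at *
  exact ⟨Nat.zero_le _, le_trans ht.2 (succ_mul_le hj _)⟩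

lemma mem_loosePathEdges {f : Finset α} :
    f ∈ loosePathEdges r m w ↔ ∃ j < m, f = pe r w j := by
  rw [loosePathEdges]
  simp only [Finset.mem_image, Finset.mem_range, pe]
  exact ⟨fun ⟨j, hj, h⟩ => ⟨j, hj, h.symm⟩, fun ⟨j, hj, h⟩ => ⟨j, hj, h.symm⟩⟩

end PathEdges


lemma loosePath_matchings_image {r m : ℕ} {w : ℕ → α} {P : FinHypergraph α}
    (he : P.edges = loosePathEdges r m w) {M : Finset (Finset α)} (hM : M ∈ P.matchings) :
    ((Finset.range m).filter (fun j => pe r w j ∈ M)).image (pe r w) = M := by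
  ext f
  rw [Finset.mem_image]
  constructor
  · rintro ⟨j, hj, rfl⟩
    exact (Finset.mem_filter.1 hj).2
  · intro hf
    have hfe : f ∈ P.edges := (mem_matchings.1 hM).1 hf
    rw [he, mem_loosePathEdges] at hfe
    obtain ⟨j, hj, rfl⟩ := hfe
    exact ⟨j, Finset.mem_filter.2 ⟨Finset.mem_range.2 hj, hf⟩, rfl⟩

lemma pe_injOn_range {r m : ℕ} {w : ℕ → α} (hr : 2 ≤ r)
    (hw : Set.InjOn w (Set.Iic (m * (r - 1)))) {S : Finset ℕ} (hS : S ⊆ Finset.range m) :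
    Set.InjOn (pe r w) S := by
  intro j hj k hk h
  exact pe_inj hr hw (Finset.mem_range.1 (hS hj)) (Finset.mem_range.1 (hS hk)) h

lemma loosePath_poly {r m : ℕ} {P : FinHypergraph α} (hr : 2 ≤ r)
    (hP : IsLoosePath r m P) (x : ℝ) :
    P.matchPoly r x = ∑ S ∈ NC m, (-1:ℝ)^S.card * x ^ (m*(r-1)+1 - r*S.card) := by
  classical
  obtain ⟨w, hw, hv, he⟩ := hP
  have hwf : P.WellFormed := by
    intro e hee
    rw [he, mem_loosePathEdges] at hee
    obtain ⟨j, hj, rfl⟩ := hee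
    rw [hv]; exact pe_subset hj
  have hun : P.Uniform r := by
    intro e hee
    rw [he, mem_loosePathEdges] at hee
    obtain ⟨j, hj, rfl⟩ := hee
    exact pe_card hr hw hj
  have hinj : Set.InjOn w ↑(Finset.Icc 0 (m*(r-1))) := by
    intro s hs t ht hst
    simp only [Finset.coe_Icc, Set.mem_Icc] at hs ht
    exact hw (Set.mem_Iic.2 hs.2) (Set.mem_Iic.2 ht.2) hst
  have hvc : P.verts.card = m*(r-1)+1 := by
    rw [hv, Finset.card_image_of_injOn hinj, Nat.card_Icc]
    omega
  rw [matchPoly_eq_sum (by omega) hwf hun, hvc]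
  refine Finset.sum_bij' (fun M _ => (Finset.range m).filter (fun j => pe r w j ∈ M))
    (fun S _ => S.image (pe r w)) ?_ ?_ ?_ ?_ ?_
  · -- hi : filter set ∈ NC m
    intro M hM
    rw [mem_NC]
    refine ⟨Finset.filter_subset _ _, ?_⟩
    intro a ha ha1
    rw [Finset.mem_filter, Finset.mem_range] at ha ha1
    have hne : pe r w a ≠ pe r w (a+1) := by
      intro h
      have := pe_inj hr hw (by omega : a < m) ha1.1 h
      omega
    have hdis := (mem_matchings.1 hM).2 _ ha.2 _ ha1.2 hne
    exact pe_not_disjoint hw ha1.1 hr hdis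
  · -- hj : image ∈ matchings
    intro S hS
    rw [mem_NC] at hS
    rw [mem_matchings]
    constructor
    · intro f hf
      rw [Finset.mem_image] at hf
      obtain ⟨j, hj, rfl⟩ := hf
      rw [he, mem_loosePathEdges]
      exact ⟨j, Finset.mem_range.1 (hS.1 hj), rfl⟩
    · intro e hee f hff hne
      rw [Finset.mem_image] at hee hff
      obtain ⟨j, hj, rfl⟩ := hee
      obtain ⟨k, hk, rfl⟩ := hff
      have hjm := Finset.mem_range.1 (hS.1 hj)
      have hkm := Finset.mem_range.1 (hS.1 hk)
      have hjk : j ≠ k := fun h => hne (by rw [h])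
      have h1 : ¬ (j + 1 = k) := fun h => hS.2 j hj (h ▸ hk)
      have h2 : ¬ (k + 1 = j) := fun h => hS.2 k hk (h ▸ hj)
      rcases (by omega : j + 1 < k ∨ k + 1 < j) with h | h
      · exact pe_disjoint hw hjm hkm hr h
      · exact (pe_disjoint hw hkm hjm hr h).symm
  · -- left inverse
    intro M hM
    exact loosePath_matchings_image he hM
  · -- right inverse
    intro S hS
    rw [mem_NC] at hS
    ext j
    rw [Finset.mem_filter, Finset.mem_range]
    constructor
    · rintro ⟨hjm, hj⟩
      rw [Finset.mem_image] at hj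
      obtain ⟨k, hk, hkj⟩ := hj
      have := pe_inj hr hw (Finset.mem_range.1 (hS.1 hk)) hjm hkj
      exact this ▸ hk
    · intro hj
      exact ⟨Finset.mem_range.1 (hS.1 hj), Finset.mem_image_of_mem _ hj⟩
  · -- value equality
    intro M hM
    have hcard : ((Finset.range m).filter (fun j => pe r w j ∈ M)).card = M.card := by
      conv_rhs => rw [← loosePath_matchings_image he hM]
      rw [Finset.card_image_of_injOn (pe_injOn_range hr hw (Finset.filter_subset _ _))]
    rw [hcard]


lemma matching_subset {M N : Finset (Finset α)} (hs : N ⊆ M) (h : IsMatchingSet M) :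
    IsMatchingSet N := fun e he f hf hne => h e (hs he) f (hs hf) hne

lemma pe_image_matching {r d : ℕ} {w : ℕ → α} (hr : 2 ≤ r)
    (hw : Set.InjOn w (Set.Iic (d * (r - 1)))) {S : Finset ℕ} (hS : S ∈ NC d) :
    IsMatchingSet (S.image (pe r w)) := by
  rw [mem_NC] at hS
  intro e hee f hff hne
  rw [Finset.mem_image] at hee hff
  obtain ⟨j, hj, rfl⟩ := hee
  obtain ⟨k, hk, rfl⟩ := hff
  have hjm := Finset.mem_range.1 (hS.1 hj)
  have hkm := Finset.mem_range.1 (hS.1 hk)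
  have hjk : j ≠ k := fun h => hne (by rw [h])
  have h1 : ¬ (j + 1 = k) := fun h => hS.2 j hj (h ▸ hk)
  have h2 : ¬ (k + 1 = j) := fun h => hS.2 k hk (h ▸ hj)
  rcases (by omega : j + 1 < k ∨ k + 1 < j) with h | h
  · exact pe_disjoint hw hjm hkm hr h
  · exact (pe_disjoint hw hkm hjm hr h).symm

lemma adjacent_pe_not_matching {r d : ℕ} {w : ℕ → α} (hr : 2 ≤ r)
    (hw : Set.InjOn w (Set.Iic (d * (r - 1)))) {M : Finset (Finset α)}
    (hM : IsMatchingSet M) {j : ℕ} (hj : j + 1 < d) (h1 : pe r w j ∈ M)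
    (h2 : pe r w (j + 1) ∈ M) : False := by
  have hne : pe r w j ≠ pe r w (j + 1) := fun h => by
    have := pe_inj hr hw (by omega) hj h; omega
  exact pe_not_disjoint hw hj hr (hM _ h1 _ h2 hne)

lemma pe_mem_image_iff {r d : ℕ} {w : ℕ → α} (hr : 2 ≤ r)
    (hw : Set.InjOn w (Set.Iic (d * (r - 1)))) {S : Finset ℕ} (hS : S ⊆ Finset.range d)
    {j : ℕ} (hj : j < d) : pe r w j ∈ S.image (pe r w) ↔ j ∈ S := by
  rw [Finset.mem_image]
  constructor
  · rintro ⟨k, hk, hkj⟩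
    rwa [← pe_inj hr hw (Finset.mem_range.1 (hS hk)) hj hkj]
  · exact fun h => ⟨j, h, rfl⟩

lemma NC_union_shift {i d : ℕ} (hi2 : 2 ≤ i) (hid : i ≤ d) {S1 S2 : Finset ℕ}
    (h1 : S1 ∈ NC (i - 2)) (h2 : S2 ∈ NC (d - i)) :
    S1 ∪ S2.image (· + i) ∈ NC d := by
  rw [mem_NC] at h1 h2 ⊢
  constructor
  · intro a ha
    rw [Finset.mem_union] at ha
    rw [Finset.mem_range]
    rcases ha with ha | ha
    · have := Finset.mem_range.1 (h1.1 ha); omega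
    · rw [Finset.mem_image] at ha
      obtain ⟨b, hb, rfl⟩ := ha
      have := Finset.mem_range.1 (h2.1 hb); omega
  · intro a ha ha1
    rw [Finset.mem_union] at ha ha1
    rcases ha with ha | ha <;> rcases ha1 with ha1 | ha1
    · exact h1.2 a ha ha1
    · rw [Finset.mem_image] at ha1
      obtain ⟨b, hb, hba⟩ := ha1
      have := Finset.mem_range.1 (h2.1 hb)
      have := Finset.mem_range.1 (h1.1 ha); omega
    · rw [Finset.mem_image] at ha
      obtain ⟨b, hb, rfl⟩ := ha
      have := Finset.mem_range.1 (h1.1 ha1); omega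
    · rw [Finset.mem_image] at ha ha1
      obtain ⟨b, hb, rfl⟩ := ha
      obtain ⟨b', hb', hb1⟩ := ha1
      have hbb : b' = b + 1 := by omega
      exact h2.2 b hb (hbb ▸ hb')

lemma card_union_shift {i : ℕ} {S1 S2 : Finset ℕ}
    (h1 : ∀ a ∈ S1, a < i) :
    (S1 ∪ S2.image (· + i)).card = S1.card + S2.card := by
  rw [Finset.card_union_of_disjoint, Finset.card_image_of_injective _ (add_left_injective i)]
  rw [Finset.disjoint_left]
  intro a ha hb
  rw [Finset.mem_image] at hb
  obtain ⟨b, hb', hba⟩ := hb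
  have := h1 a ha; omega

lemma sum_pair_factor {β γ : Type*} (s : Finset β) (t : Finset γ) (f : β → ℝ) (g : γ → ℝ) :
    ∑ p ∈ s ×ˢ t, f p.1 * g p.2 = (∑ b ∈ s, f b) * (∑ b ∈ t, g b) := by
  rw [Finset.sum_mul_sum, Finset.sum_product' (f := fun a b => f a * g b)]

lemma sum_triple_factor {β γ δ : Type*} (s : Finset β) (t : Finset γ) (v : Finset δ)
    (c : ℝ) (f : β → ℝ) (g : γ → ℝ) (h : δ → ℝ) :
    ∑ p ∈ s ×ˢ (t ×ˢ v), -(c * f p.1 * g p.2.1 * h p.2.2)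
      = -(c * (∑ b ∈ s, f b) * (∑ b ∈ t, g b) * (∑ b ∈ v, h b)) := by
  have h1 : ∀ p ∈ s ×ˢ (t ×ˢ v), -(c * f p.1 * g p.2.1 * h p.2.2)
      = (-c) * (f p.1 * (g p.2.1 * h p.2.2)) := fun p _ => by ring
  rw [Finset.sum_congr rfl h1, ← Finset.mul_sum,
    sum_pair_factor s (t ×ˢ v) f (fun q => g q.1 * h q.2),
    sum_pair_factor t v g h]
  ring

lemma mem_removeVerts_edges {H : FinHypergraph α} {S : Finset α} {f : Finset α} :
    f ∈ (H.removeVerts S).edges ↔ f ∈ H.edges ∧ Disjoint f S := Finset.mem_filter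

lemma removeVerts_wf {H : FinHypergraph α} (hwf : H.WellFormed) (S : Finset α) :
    (H.removeVerts S).WellFormed := by
  intro e he
  rw [mem_removeVerts_edges] at he
  intro v hv
  rw [removeVerts, Finset.mem_sdiff]
  exact ⟨hwf e he.1 hv, fun hvS => (Finset.disjoint_left.1 he.2) hv hvS⟩

lemma removeVerts_unif {H : FinHypergraph α} {r : ℕ} (h : H.Uniform r) (S : Finset α) :
    (H.removeVerts S).Uniform r := fun e he => h e (mem_removeVerts_edges.1 he).1


end FinHypergraph

open FinHypergraph

/-- For `r ≥ 3`, `d ≥ 3`, an `r`-uniform supertree `H` with a vertex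
`u`, and `2 ≤ i ≤ d`, the hypergraph `P_d^r(v_i,u)H` obtained by identifying the joint
vertex `v_i` of the loose path `P_d^r` with `u` satisfies
`φ(P_d^r(v_i,u)H, x) = φ(P_d^r,x)·φ(H−u,x)
  − x^(2r−4)·φ(P_{i−2}^r,x)·φ(P_{d−i}^r,x)·Σ_{e ∈ E_u(H)} φ(H−V(e),x)`. -/
theorem matchPoly_path_joint_identify {α : Type*} (r d : ℕ) (hr : 3 ≤ r) (hd : 3 ≤ d)
    (H : FinHypergraph α) (hH : H.IsSupertree r) (u : α) (hu : u ∈ H.verts)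
    (i : ℕ) (hi2 : 2 ≤ i) (hid : i ≤ d)
    (T Pd P1 P2 : FinHypergraph α)
    (hT : IsPathIdentify r d ((i - 1) * (r - 1)) H u T)
    (hPd : IsLoosePath r d Pd)
    (hP1 : IsLoosePath r (i - 2) P1) (hP2 : IsLoosePath r (d - i) P2) :
    ∀ x : ℝ, T.matchPoly r x
      = Pd.matchPoly r x * (H.removeVerts {u}).matchPoly r x
        - x ^ (2 * r - 4) * P1.matchPoly r x * P2.matchPoly r x *
            ∑ e ∈ H.edges.filter (fun e => u ∈ e), (H.removeVerts e).matchPoly r x := by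
  intro x
  classical
  obtain ⟨hwfH, hunH, -, -⟩ := hH
  obtain ⟨w, hw, hwc, hnew, hTv, hTe⟩ := hT
  have hr2 : 2 ≤ r := by omega
  have hr1 : (1:ℕ) ≤ r := by omega
  set n := H.verts.card with hn
  have hn1 : 1 ≤ n := Finset.card_pos.2 ⟨u, hu⟩
  have hcd : (i - 1) * (r - 1) ≤ d * (r - 1) := Nat.mul_le_mul_right _ (by omega)
  -- basic path/H interaction facts
  have hwtH : ∀ t, t ≤ d * (r - 1) → w t ∈ H.verts → t = (i - 1) * (r - 1) := by
    intro t ht hmem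
    by_contra hne
    exact hnew t ht hne hmem
  have hpe_capH : ∀ j < d, ∀ v ∈ pe r w j, v ∈ H.verts → v = u := by
    intro j hj v hv hvH
    rw [pe, Finset.mem_image] at hv
    obtain ⟨t, ht, rfl⟩ := hv
    rw [Finset.mem_Icc] at ht
    have htle : t ≤ d * (r - 1) := le_trans ht.2 (succ_mul_le hj _)
    rw [hwtH t htle hvH]
    exact hwc
  have hu_pe : ∀ j < d, (u ∈ pe r w j ↔ (j + 2 = i ∨ j + 1 = i)) := by
    intro j hj
    rw [← hwc, mem_pe_iff hw hj hcd]
    constructor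
    · rintro ⟨h1, h2⟩
      have e1 : j ≤ i - 1 := by
        by_contra hc
        have : (i - 1) * (r - 1) < j * (r - 1) :=
          Nat.mul_lt_mul_of_lt_of_le (by omega) le_rfl (by omega)
        omega
      have e2 : i - 1 ≤ j + 1 := by
        by_contra hc
        have : (j + 1) * (r - 1) < (i - 1) * (r - 1) :=
          Nat.mul_lt_mul_of_lt_of_le (by omega) le_rfl (by omega)
        omega
      omega
    · intro h
      exact ⟨Nat.mul_le_mul_right _ (by omega), Nat.mul_le_mul_right _ (by omega)⟩
  have hpe_notH : ∀ j < d, pe r w j ∉ H.edges := by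
    intro j hj hmem
    have hsub := hwfH _ hmem
    have hmm : ∀ t, j * (r - 1) ≤ t → t ≤ (j + 1) * (r - 1) → w t ∈ H.verts := by
      intro t h1 h2
      apply hsub
      rw [pe, Finset.mem_image]
      exact ⟨t, Finset.mem_Icc.2 ⟨h1, h2⟩, rfl⟩
    have hstep : j * (r - 1) + 1 ≤ (j + 1) * (r - 1) := by
      have h' : (j + 1) * (r - 1) = j * (r - 1) + (r - 1) := by ring
      omega
    have hle1 : j * (r - 1) + 1 ≤ d * (r - 1) := le_trans hstep (succ_mul_le hj _)
    have e0 := hwtH (j * (r - 1)) (by omega) (hmm _ le_rfl (by omega))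
    have e1 := hwtH (j * (r - 1) + 1) hle1 (hmm _ (by omega) hstep)
    omega
  have hdisjHpe : ∀ f : Finset α, f ⊆ H.verts → ∀ j < d,
      (u ∉ f ∨ u ∉ pe r w j) → Disjoint f (pe r w j) := by
    intro f hf j hj hcase
    rw [Finset.disjoint_right]
    intro v hvp hvf
    have hveq := hpe_capH j hj v hvp (hf hvf)
    subst hveq
    rcases hcase with h | h
    · exact h hvf
    · exact h hvp
  have hTedge : ∀ f : Finset α, f ∈ T.edges ↔ f ∈ H.edges ∨ ∃ j < d, f = pe r w j := by
    intro f
    rw [hTe, Finset.mem_union, mem_loosePathEdges]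
  have hwfT : T.WellFormed := by
    intro e he
    rw [hTedge] at he
    rw [hTv]
    rcases he with h | ⟨j, hj, rfl⟩
    · exact subset_trans (hwfH e h) Finset.subset_union_left
    · exact subset_trans (pe_subset hj) Finset.subset_union_right
  have hunT : T.Uniform r := by
    intro e he
    rw [hTedge] at he
    rcases he with h | ⟨j, hj, rfl⟩
    · exact hunH e h
    · exact pe_card hr2 hw hj
  have hNT : T.verts.card = n + d * (r - 1) := by
    have hinter : H.verts ∩ (Finset.Icc 0 (d * (r - 1))).image w = {u} := by
      apply Finset.Subset.antisymm
      · intro v hv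
        rw [Finset.mem_inter, Finset.mem_image] at hv
        obtain ⟨hvH, t, ht, rfl⟩ := hv
        rw [Finset.mem_Icc] at ht
        rw [Finset.mem_singleton, hwtH t ht.2 hvH]
        exact hwc
      · intro v hv
        rw [Finset.mem_singleton] at hv
        subst hv
        rw [Finset.mem_inter, Finset.mem_image]
        exact ⟨hu, (i-1)*(r-1), Finset.mem_Icc.2 ⟨Nat.zero_le _, hcd⟩, hwc⟩
    have himg : ((Finset.Icc 0 (d * (r - 1))).image w).card = d * (r - 1) + 1 := by
      rw [Finset.card_image_of_injOn, Nat.card_Icc]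
      · omega
      · intro s hs t ht hst
        simp only [Finset.coe_Icc, Set.mem_Icc] at hs ht
        exact hw (Set.mem_Iic.2 hs.2) (Set.mem_Iic.2 ht.2) hst
    have hcui := Finset.card_union_add_card_inter H.verts ((Finset.Icc 0 (d * (r - 1))).image w)
    rw [hinter, Finset.card_singleton, himg, ← hTv] at hcui
    omega
  have hnu : (H.removeVerts {u}).verts.card = n - 1 := by
    show (H.verts \ {u}).card = n - 1
    rw [Finset.card_sdiff_of_subset (Finset.singleton_subset_iff.2 hu), Finset.card_singleton]
  -- decomposition of a matching of T
  have hMdecomp : ∀ M ∈ T.matchings,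
      M = M.filter (fun f => f ∈ H.edges)
        ∪ ((Finset.range d).filter (fun j => pe r w j ∈ M)).image (pe r w) := by
    intro M hM
    ext f
    rw [Finset.mem_union, Finset.mem_filter, Finset.mem_image]
    constructor
    · intro hf
      have hfe := (mem_matchings.1 hM).1 hf
      rw [hTedge] at hfe
      rcases hfe with h | ⟨j, hj, rfl⟩
      · exact Or.inl ⟨hf, h⟩
      · exact Or.inr ⟨j, Finset.mem_filter.2 ⟨Finset.mem_range.2 hj, hf⟩, rfl⟩
    · intro hf
      rcases hf with ⟨h, -⟩ | ⟨j, hj, rfl⟩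
      · exact h
      · exact (Finset.mem_filter.1 hj).2
  have hdisjAI : ∀ (A : Finset (Finset α)) (S : Finset ℕ), A ⊆ H.edges →
      S ⊆ Finset.range d → Disjoint A (S.image (pe r w)) := by
    intro A S hA hS
    rw [Finset.disjoint_left]
    intro f hf hfi
    rw [Finset.mem_image] at hfi
    obtain ⟨j, hj, rfl⟩ := hfi
    exact hpe_notH j (Finset.mem_range.1 (hS hj)) (hA hf)
  -- Part A
  have partA : ∑ M ∈ T.matchings.filter (fun M => ¬ ∃ e ∈ M, e ∈ H.edges ∧ u ∈ e),
        (-1:ℝ)^M.card * x ^ (n + d*(r-1) - r * M.card)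
      = (∑ S ∈ NC d, (-1:ℝ)^S.card * x ^ (d*(r-1)+1 - r*S.card)) *
          (∑ A ∈ (H.removeVerts {u}).matchings, (-1:ℝ)^A.card * x ^ (n-1 - r*A.card)) := by
    rw [← sum_pair_factor (NC d) (H.removeVerts {u}).matchings
      (fun S => (-1:ℝ)^S.card * x ^ (d*(r-1)+1 - r*S.card))
      (fun A => (-1:ℝ)^A.card * x ^ (n-1 - r*A.card))]
    have hSNC : ∀ M ∈ T.matchings,
        (Finset.range d).filter (fun j => pe r w j ∈ M) ∈ NC d := by
      intro M hM
      rw [mem_NC]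
      refine ⟨Finset.filter_subset _ _, fun a ha ha1 => ?_⟩
      rw [Finset.mem_filter, Finset.mem_range] at ha ha1
      exact adjacent_pe_not_matching hr2 hw (mem_matchings.1 hM).2 ha1.1 ha.2 ha1.2
    have hAmem : ∀ M ∈ T.matchings.filter (fun M => ¬ ∃ e ∈ M, e ∈ H.edges ∧ u ∈ e),
        M.filter (fun f => f ∈ H.edges) ∈ (H.removeVerts {u}).matchings := by
      intro M hM
      rw [Finset.mem_filter] at hM
      rw [mem_matchings]
      refine ⟨?_, matching_subset (Finset.filter_subset _ _) (mem_matchings.1 hM.1).2⟩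
      intro f hf
      rw [Finset.mem_filter] at hf
      rw [mem_removeVerts_edges]
      exact ⟨hf.2, Finset.disjoint_singleton_right.2 (fun hus => hM.2 ⟨f, hf.1, hf.2, hus⟩)⟩
    refine Finset.sum_bij'
      (fun M _ => (((Finset.range d).filter (fun j => pe r w j ∈ M)),
        M.filter (fun f => f ∈ H.edges)))
      (fun p _ => p.2 ∪ p.1.image (pe r w)) ?_ ?_ ?_ ?_ ?_
    · -- hi
      intro M hM
      rw [Finset.mem_product]
      exact ⟨hSNC M (Finset.mem_filter.1 hM).1, hAmem M hM⟩
    · -- hj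
      intro p hp
      rw [Finset.mem_product] at hp
      obtain ⟨hpS, hpA⟩ := hp
      have hpS1 : p.1 ⊆ Finset.range d := (mem_NC.1 hpS).1
      rw [mem_matchings] at hpA
      have hpA1 : p.2 ⊆ H.edges := fun f hf => (mem_removeVerts_edges.1 (hpA.1 hf)).1
      have hpAu : ∀ f ∈ p.2, u ∉ f := fun f hf =>
        Finset.disjoint_singleton_right.1 (mem_removeVerts_edges.1 (hpA.1 hf)).2
      rw [Finset.mem_filter]
      constructor
      · rw [mem_matchings]
        constructor
        · intro f hf
          rw [Finset.mem_union] at hf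
          rw [hTedge]
          rcases hf with hf | hf
          · exact Or.inl (hpA1 hf)
          · rw [Finset.mem_image] at hf
            obtain ⟨j, hj', rfl⟩ := hf
            exact Or.inr ⟨j, Finset.mem_range.1 (hpS1 hj'), rfl⟩
        · intro f hf g hg hfg
          rw [Finset.mem_union] at hf hg
          rcases hf with hf | hf <;> rcases hg with hg | hg
          · exact hpA.2 f hf g hg hfg
          · rw [Finset.mem_image] at hg
            obtain ⟨j, hj', rfl⟩ := hg
            exact hdisjHpe f (hwfH f (hpA1 hf)) j (Finset.mem_range.1 (hpS1 hj'))
              (Or.inl (hpAu f hf))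
          · rw [Finset.mem_image] at hf
            obtain ⟨j, hj', rfl⟩ := hf
            exact (hdisjHpe g (hwfH g (hpA1 hg)) j (Finset.mem_range.1 (hpS1 hj'))
              (Or.inl (hpAu g hg))).symm
          · exact pe_image_matching hr2 hw hpS f hf g hg hfg
      · rintro ⟨f, hf, hfH, hfu⟩
        rw [Finset.mem_union] at hf
        rcases hf with hf | hf
        · exact hpAu f hf hfu
        · rw [Finset.mem_image] at hf
          obtain ⟨j, hj', rfl⟩ := hf
          exact hpe_notH j (Finset.mem_range.1 (hpS1 hj')) hfH
    · -- left inverse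
      intro M hM
      exact (hMdecomp M (Finset.mem_filter.1 hM).1).symm
    · -- right inverse
      intro p hp
      rw [Finset.mem_product] at hp
      obtain ⟨hpS, hpA⟩ := hp
      have hpS1 : p.1 ⊆ Finset.range d := (mem_NC.1 hpS).1
      rw [mem_matchings] at hpA
      have hpA1 : p.2 ⊆ H.edges := fun f hf => (mem_removeVerts_edges.1 (hpA.1 hf)).1
      have c1 : (Finset.range d).filter (fun j => pe r w j ∈ p.2 ∪ p.1.image (pe r w)) = p.1 := by
        ext j
        rw [Finset.mem_filter, Finset.mem_range, Finset.mem_union]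
        constructor
        · rintro ⟨hjd, hj | hj⟩
          · exact absurd (hpA1 hj) (hpe_notH j hjd)
          · exact (pe_mem_image_iff hr2 hw hpS1 hjd).1 hj
        · intro hj
          have hjd := Finset.mem_range.1 (hpS1 hj)
          exact ⟨hjd, Or.inr ((pe_mem_image_iff hr2 hw hpS1 hjd).2 hj)⟩
      have c2 : (p.2 ∪ p.1.image (pe r w)).filter (fun f => f ∈ H.edges) = p.2 := by
        ext f
        rw [Finset.mem_filter, Finset.mem_union]
        constructor
        · rintro ⟨hf | hf, hfH⟩
          · exact hf
          · rw [Finset.mem_image] at hf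
            obtain ⟨j, hj', rfl⟩ := hf
            exact absurd hfH (hpe_notH j (Finset.mem_range.1 (hpS1 hj')))
        · intro hf
          exact ⟨Or.inl hf, hpA1 hf⟩
      rw [c1, c2]
    · -- value
      intro M hM
      dsimp only
      have hM1 : M ∈ T.matchings := (Finset.mem_filter.1 hM).1
      have hS : (Finset.range d).filter (fun j => pe r w j ∈ M) ⊆ Finset.range d :=
        Finset.filter_subset _ _
      have hA : M.filter (fun f => f ∈ H.edges) ⊆ H.edges :=
        fun f hf => (Finset.mem_filter.1 hf).2
      have hcard : M.card = (M.filter (fun f => f ∈ H.edges)).card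
          + ((Finset.range d).filter (fun j => pe r w j ∈ M)).card := by
        conv_lhs => rw [hMdecomp M hM1]
        rw [Finset.card_union_of_disjoint (hdisjAI _ _ hA hS),
          Finset.card_image_of_injOn (pe_injOn_range hr2 hw hS)]
      have hbS : r * ((Finset.range d).filter (fun j => pe r w j ∈ M)).card ≤ d*(r-1)+1 :=
        NC_card_bound hr2 (hSNC M hM1)
      have hbA : r * (M.filter (fun f => f ∈ H.edges)).card ≤ n - 1 := by
        have := matching_card_bound (removeVerts_wf hwfH {u}) (removeVerts_unif hunH {u})
          (hAmem M hM)
        rwa [hnu] at this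
      have hmul : r * ((M.filter (fun f => f ∈ H.edges)).card
            + ((Finset.range d).filter (fun j => pe r w j ∈ M)).card)
          = r * (M.filter (fun f => f ∈ H.edges)).card
            + r * ((Finset.range d).filter (fun j => pe r w j ∈ M)).card := by ring
      have hexp : n + d*(r-1) - r * M.card
          = (d*(r-1)+1 - r * ((Finset.range d).filter (fun j => pe r w j ∈ M)).card)
            + (n-1 - r * (M.filter (fun f => f ∈ H.edges)).card) := by
        rw [hcard]
        omega
      rw [hexp, hcard]
      ring
  have partB : ∑ M ∈ T.matchings.filter (fun M => ∃ e ∈ M, e ∈ H.edges ∧ u ∈ e),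
        (-1:ℝ)^M.card * x ^ (n + d*(r-1) - r * M.card)
      = -(x ^ (2*r-4) *
          (∑ S1 ∈ NC (i-2), (-1:ℝ)^S1.card * x ^ ((i-2)*(r-1)+1 - r*S1.card)) *
          (∑ S2 ∈ NC (d-i), (-1:ℝ)^S2.card * x ^ ((d-i)*(r-1)+1 - r*S2.card)) *
          (∑ e ∈ H.edges.filter (fun e => u ∈ e), ∑ A ∈ (H.removeVerts e).matchings,
            (-1:ℝ)^A.card * x ^ (n - r - r*A.card))) := by
    have hfib : T.matchings.filter (fun M => ∃ e ∈ M, e ∈ H.edges ∧ u ∈ e)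
        = (H.edges.filter (fun e => u ∈ e)).biUnion
            (fun e => (T.matchings.filter (fun M => ∃ e' ∈ M, e' ∈ H.edges ∧ u ∈ e')).filter
              (fun M => e ∈ M)) := by
      ext M
      simp only [Finset.mem_biUnion, Finset.mem_filter]
      constructor
      · rintro ⟨hM, e, heM, heH, heu⟩
        exact ⟨e, ⟨heH, heu⟩, ⟨hM, e, heM, heH, heu⟩, heM⟩
      · rintro ⟨e, he, ⟨hM, hG⟩, heM⟩
        exact ⟨hM, hG⟩
    have hpd : (↑(H.edges.filter (fun e => u ∈ e)) : Set (Finset α)).PairwiseDisjoint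
        (fun e => (T.matchings.filter (fun M => ∃ e' ∈ M, e' ∈ H.edges ∧ u ∈ e')).filter
          (fun M => e ∈ M)) := by
      intro e he e' he' hne
      rw [Finset.mem_coe, Finset.mem_filter] at he he'
      rw [Function.onFun, Finset.disjoint_left]
      intro M hM hM'
      rw [Finset.mem_filter, Finset.mem_filter] at hM hM'
      have hmt := (mem_matchings.1 hM.1.1).2
      have hdisj := hmt e hM.2 e' hM'.2 hne
      exact (Finset.disjoint_left.1 hdisj) he.2 he'.2
    have hper : ∀ e ∈ H.edges.filter (fun e => u ∈ e),
        ∑ M ∈ (T.matchings.filter (fun M => ∃ e' ∈ M, e' ∈ H.edges ∧ u ∈ e')).filter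
            (fun M => e ∈ M), (-1:ℝ)^M.card * x ^ (n + d*(r-1) - r * M.card)
        = -(x ^ (2*r-4) *
            (∑ S1 ∈ NC (i-2), (-1:ℝ)^S1.card * x ^ ((i-2)*(r-1)+1 - r*S1.card)) *
            (∑ S2 ∈ NC (d-i), (-1:ℝ)^S2.card * x ^ ((d-i)*(r-1)+1 - r*S2.card)) *
            (∑ A ∈ (H.removeVerts e).matchings, (-1:ℝ)^A.card * x ^ (n - r - r*A.card))) := by
      intro e he
      rw [Finset.mem_filter] at he
      obtain ⟨heH, heu⟩ := he
      have hesub : e ⊆ H.verts := hwfH e heH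
      have hecard : e.card = r := hunH e heH
      have hrn : r ≤ n := hecard ▸ Finset.card_le_card hesub
      have hnre : (H.removeVerts e).verts.card = n - r := by
        show (H.verts \ e).card = n - r
        rw [Finset.card_sdiff_of_subset hesub, hecard]
      have henon : e.Nonempty := Finset.card_pos.1 (by omega)
      have hAe : ∀ M ∈ (T.matchings.filter
            (fun M => ∃ e' ∈ M, e' ∈ H.edges ∧ u ∈ e')).filter (fun M => e ∈ M),
          (M.filter (fun f => f ∈ H.edges)).erase e ∈ (H.removeVerts e).matchings := by
        intro M hM
        rw [Finset.mem_filter, Finset.mem_filter] at hM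
        obtain ⟨⟨hMm, -⟩, heM⟩ := hM
        have hmt := (mem_matchings.1 hMm).2
        rw [mem_matchings]
        constructor
        · intro f hf
          have h1 := Finset.ne_of_mem_erase hf
          have h2 := Finset.mem_of_mem_erase hf
          rw [Finset.mem_filter] at h2
          rw [mem_removeVerts_edges]
          exact ⟨h2.2, hmt f h2.1 e heM h1⟩
        · exact matching_subset
            (subset_trans (Finset.erase_subset _ _) (Finset.filter_subset _ _)) hmt
      have hS1mem : ∀ M ∈ (T.matchings.filter
            (fun M => ∃ e' ∈ M, e' ∈ H.edges ∧ u ∈ e')).filter (fun M => e ∈ M),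
          (Finset.range (i-2)).filter (fun j => pe r w j ∈ M) ∈ NC (i-2) := by
        intro M hM
        rw [Finset.mem_filter, Finset.mem_filter] at hM
        have hmt := (mem_matchings.1 hM.1.1).2
        rw [mem_NC]
        refine ⟨Finset.filter_subset _ _, fun a ha ha1 => ?_⟩
        rw [Finset.mem_filter, Finset.mem_range] at ha ha1
        exact adjacent_pe_not_matching hr2 hw hmt (by omega) ha.2 ha1.2
      have hS2mem : ∀ M ∈ (T.matchings.filter
            (fun M => ∃ e' ∈ M, e' ∈ H.edges ∧ u ∈ e')).filter (fun M => e ∈ M),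
          (Finset.range (d-i)).filter (fun j => pe r w (j+i) ∈ M) ∈ NC (d-i) := by
        intro M hM
        rw [Finset.mem_filter, Finset.mem_filter] at hM
        have hmt := (mem_matchings.1 hM.1.1).2
        rw [mem_NC]
        refine ⟨Finset.filter_subset _ _, fun a ha ha1 => ?_⟩
        rw [Finset.mem_filter, Finset.mem_range] at ha ha1
        have h2' : pe r w ((a+i)+1) ∈ M := by
          rw [show (a+i)+1 = a+1+i from by omega]
          exact ha1.2
        exact adjacent_pe_not_matching hr2 hw hmt (by omega : (a+i)+1 < d) ha.2 h2'
      have hMBL : ∀ M ∈ (T.matchings.filter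
            (fun M => ∃ e' ∈ M, e' ∈ H.edges ∧ u ∈ e')).filter (fun M => e ∈ M),
          M = insert e ((M.filter (fun f => f ∈ H.edges)).erase e)
            ∪ (((Finset.range (i-2)).filter (fun j => pe r w j ∈ M))
                ∪ ((Finset.range (d-i)).filter (fun j => pe r w (j+i) ∈ M)).image
                  (· + i)).image (pe r w) := by
        intro M hM
        rw [Finset.mem_filter, Finset.mem_filter] at hM
        obtain ⟨⟨hMm, -⟩, heM⟩ := hM
        have hmt := (mem_matchings.1 hMm).2
        ext f
        constructor
        · intro hf
          rw [Finset.mem_union, Finset.mem_insert]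
          have hfe := (mem_matchings.1 hMm).1 hf
          rw [hTedge] at hfe
          rcases hfe with hfH | ⟨j, hjd, rfl⟩
          · by_cases hfeq : f = e
            · exact Or.inl (Or.inl hfeq)
            · exact Or.inl (Or.inr (Finset.mem_erase.2 ⟨hfeq, Finset.mem_filter.2 ⟨hf, hfH⟩⟩))
          · have hnee : pe r w j ≠ e := fun h => hpe_notH j hjd (h ▸ heH)
            have hdisj := hmt _ hf e heM hnee
            have hupe : u ∉ pe r w j := fun hup => (Finset.disjoint_left.1 hdisj) hup heu
            rw [hu_pe j hjd] at hupe
            push_neg at hupe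
            right
            rw [Finset.mem_image]
            rcases (by omega : j < i - 2 ∨ i ≤ j) with hcase | hcase
            · exact ⟨j, Finset.mem_union_left _
                (Finset.mem_filter.2 ⟨Finset.mem_range.2 hcase, hf⟩), rfl⟩
            · refine ⟨j, Finset.mem_union_right _ ?_, rfl⟩
              rw [Finset.mem_image]
              refine ⟨j - i, Finset.mem_filter.2 ⟨Finset.mem_range.2 (by omega), ?_⟩, by omega⟩
              rw [show j - i + i = j from by omega]
              exact hf
        · intro hf
          rw [Finset.mem_union, Finset.mem_insert] at hf
          rcases hf with (rfl | hf) | hf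
          · exact heM
          · exact (Finset.mem_filter.1 (Finset.mem_of_mem_erase hf)).1
          · rw [Finset.mem_image] at hf
            obtain ⟨j, hj, rfl⟩ := hf
            rw [Finset.mem_union] at hj
            rcases hj with hj | hj
            · exact (Finset.mem_filter.1 hj).2
            · rw [Finset.mem_image] at hj
              obtain ⟨k, hk, rfl⟩ := hj
              exact (Finset.mem_filter.1 hk).2
      rw [← sum_triple_factor (NC (i-2)) (NC (d-i)) (H.removeVerts e).matchings
        (x ^ (2*r-4))
        (fun S1 => (-1:ℝ)^S1.card * x ^ ((i-2)*(r-1)+1 - r*S1.card))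
        (fun S2 => (-1:ℝ)^S2.card * x ^ ((d-i)*(r-1)+1 - r*S2.card))
        (fun A => (-1:ℝ)^A.card * x ^ (n - r - r*A.card))]
      refine Finset.sum_bij'
        (fun M _ => ((Finset.range (i-2)).filter (fun j => pe r w j ∈ M),
          ((Finset.range (d-i)).filter (fun j => pe r w (j+i) ∈ M),
           (M.filter (fun f => f ∈ H.edges)).erase e)))
        (fun p _ => insert e p.2.2 ∪ (p.1 ∪ p.2.1.image (· + i)).image (pe r w))
        ?_ ?_ ?_ ?_ ?_
      · -- hi
        intro M hM
        exact Finset.mem_product.2 ⟨hS1mem M hM,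
          Finset.mem_product.2 ⟨hS2mem M hM, hAe M hM⟩⟩
      · -- hj
        intro p hp
        have hp1 : p.1 ∈ NC (i-2) := (Finset.mem_product.1 hp).1
        have hp2 : p.2.1 ∈ NC (d-i) :=
          (Finset.mem_product.1 (Finset.mem_product.1 hp).2).1
        have hpA : p.2.2 ∈ (H.removeVerts e).matchings :=
          (Finset.mem_product.1 (Finset.mem_product.1 hp).2).2
        have hS12 : p.1 ∪ p.2.1.image (· + i) ∈ NC d := NC_union_shift hi2 hid hp1 hp2
        have hS12r : p.1 ∪ p.2.1.image (· + i) ⊆ Finset.range d := (mem_NC.1 hS12).1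
        have hAsub : p.2.2 ⊆ H.edges :=
          fun f hf => (mem_removeVerts_edges.1 ((mem_matchings.1 hpA).1 hf)).1
        have hAdise : ∀ f ∈ p.2.2, Disjoint f e :=
          fun f hf => (mem_removeVerts_edges.1 ((mem_matchings.1 hpA).1 hf)).2
        have hS12u : ∀ j ∈ p.1 ∪ p.2.1.image (· + i), u ∉ pe r w j := by
          intro j hj hupj
          have hjd : j < d := Finset.mem_range.1 (hS12r hj)
          rw [hu_pe j hjd] at hupj
          rw [Finset.mem_union] at hj
          rcases hj with hj | hj
          · have := Finset.mem_range.1 ((mem_NC.1 hp1).1 hj); omega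
          · rw [Finset.mem_image] at hj
            obtain ⟨k, hk, rfl⟩ := hj
            omega
        have hinsH : insert e p.2.2 ⊆ H.edges := by
          intro f hf
          rw [Finset.mem_insert] at hf
          rcases hf with rfl | hf
          · exact heH
          · exact hAsub hf
        rw [Finset.mem_filter]
        refine ⟨Finset.mem_filter.2 ⟨?_, ?_⟩, ?_⟩
        · rw [mem_matchings]
          constructor
          · intro f hf
            rw [Finset.mem_union] at hf
            rw [hTedge]
            rcases hf with hf | hf
            · exact Or.inl (hinsH hf)
            · rw [Finset.mem_image] at hf
              obtain ⟨j, hj', rfl⟩ := hf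
              exact Or.inr ⟨j, Finset.mem_range.1 (hS12r hj'), rfl⟩
          · intro f hf g hg hfg
            rw [Finset.mem_union] at hf hg
            rcases hf with hf | hf <;> rcases hg with hg | hg
            · rw [Finset.mem_insert] at hf hg
              rcases hf with rfl | hf <;> rcases hg with rfl | hg
              · exact absurd rfl hfg
              · exact (hAdise g hg).symm
              · exact hAdise f hf
              · exact (mem_matchings.1 hpA).2 f hf g hg hfg
            · rw [Finset.mem_image] at hg
              obtain ⟨j, hj', rfl⟩ := hg
              exact hdisjHpe f (hwfH f (hinsH hf)) j (Finset.mem_range.1 (hS12r hj'))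
                (Or.inr (hS12u j hj'))
            · rw [Finset.mem_image] at hf
              obtain ⟨j, hj', rfl⟩ := hf
              exact (hdisjHpe g (hwfH g (hinsH hg)) j (Finset.mem_range.1 (hS12r hj'))
                (Or.inr (hS12u j hj'))).symm
            · exact pe_image_matching hr2 hw hS12 f hf g hg hfg
        · exact ⟨e, Finset.mem_union_left _ (Finset.mem_insert_self e _), heH, heu⟩
        · exact Finset.mem_union_left _ (Finset.mem_insert_self e _)
      · -- left inverse
        intro M hM
        exact (hMBL M hM).symm
      · -- right inverse
        intro p hp
        obtain ⟨S1, S2, A⟩ := p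
        have hp1 : S1 ∈ NC (i-2) := (Finset.mem_product.1 hp).1
        have hp2 : S2 ∈ NC (d-i) :=
          (Finset.mem_product.1 (Finset.mem_product.1 hp).2).1
        have hpA : A ∈ (H.removeVerts e).matchings :=
          (Finset.mem_product.1 (Finset.mem_product.1 hp).2).2
        have hS12 : S1 ∪ S2.image (· + i) ∈ NC d := NC_union_shift hi2 hid hp1 hp2
        have hS12r : S1 ∪ S2.image (· + i) ⊆ Finset.range d := (mem_NC.1 hS12).1
        have hAsub : A ⊆ H.edges :=
          fun f hf => (mem_removeVerts_edges.1 ((mem_matchings.1 hpA).1 hf)).1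
        have hAdise : ∀ f ∈ A, Disjoint f e :=
          fun f hf => (mem_removeVerts_edges.1 ((mem_matchings.1 hpA).1 hf)).2
        have hinsH : insert e A ⊆ H.edges := by
          intro f hf
          rw [Finset.mem_insert] at hf
          rcases hf with rfl | hf
          · exact heH
          · exact hAsub hf
        simp only [Prod.mk.injEq]
        have hMem : ∀ j, j ∈ S1 ∪ S2.image (· + i) →
            pe r w j ∈ insert e A ∪ (S1 ∪ S2.image (· + i)).image (pe r w) :=
          fun j hj => Finset.mem_union_right _ (Finset.mem_image_of_mem _ hj)
        have hpenotins : ∀ j, j < d →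
            pe r w j ∉ insert e A := by
          intro j hjd hmem
          exact hpe_notH j hjd (hinsH hmem)
        refine ⟨?_, ?_, ?_⟩
        · ext j
          rw [Finset.mem_filter, Finset.mem_range]
          constructor
          · rintro ⟨hji, hjM⟩
            have hjd : j < d := by omega
            rw [Finset.mem_union] at hjM
            rcases hjM with hjM | hjM
            · exact absurd hjM (hpenotins j hjd)
            · have := (pe_mem_image_iff hr2 hw hS12r hjd).1 hjM
              rw [Finset.mem_union] at this
              rcases this with h | h
              · exact h
              · rw [Finset.mem_image] at h
                obtain ⟨k, hk, hkj⟩ := h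
                omega
          · intro hj
            have hji : j < i - 2 := Finset.mem_range.1 ((mem_NC.1 hp1).1 hj)
            exact ⟨hji, hMem j (Finset.mem_union_left _ hj)⟩
        · ext k
          rw [Finset.mem_filter, Finset.mem_range]
          constructor
          · rintro ⟨hki, hkM⟩
            have hkd : k + i < d := by omega
            rw [Finset.mem_union] at hkM
            rcases hkM with hkM | hkM
            · exact absurd hkM (hpenotins (k+i) hkd)
            · have := (pe_mem_image_iff hr2 hw hS12r hkd).1 hkM
              rw [Finset.mem_union] at this
              rcases this with h | h
              · have := Finset.mem_range.1 ((mem_NC.1 hp1).1 h)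
                omega
              · rw [Finset.mem_image] at h
                obtain ⟨k', hk', hkk⟩ := h
                have : k' = k := by omega
                exact this ▸ hk'
          · intro hk
            have hki : k < d - i := Finset.mem_range.1 ((mem_NC.1 hp2).1 hk)
            refine ⟨hki, hMem (k+i) (Finset.mem_union_right _ ?_)⟩
            exact Finset.mem_image_of_mem _ hk
        · have hfilter : (insert e A ∪ (S1 ∪ S2.image (· + i)).image (pe r w)).filter
              (fun f => f ∈ H.edges) = insert e A := by
            ext f
            rw [Finset.mem_filter, Finset.mem_union]
            constructor
            · rintro ⟨hf | hf, hfH⟩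
              · exact hf
              · rw [Finset.mem_image] at hf
                obtain ⟨j, hj', rfl⟩ := hf
                exact absurd hfH (hpe_notH j (Finset.mem_range.1 (hS12r hj')))
            · intro hf
              exact ⟨Or.inl hf, hinsH hf⟩
          rw [hfilter]
          apply Finset.erase_insert
          intro heA
          have hde : e = ⊥ := disjoint_self.1 (hAdise e heA)
          rw [Finset.bot_eq_empty] at hde
          rw [hde] at henon
          exact Finset.not_nonempty_empty henon
      · -- value
        intro M hM
        dsimp only
        have hS1 := hS1mem M hM
        have hS2 := hS2mem M hM
        have hA := hAe M hM
        have hS12 : ((Finset.range (i-2)).filter (fun j => pe r w j ∈ M))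
            ∪ ((Finset.range (d-i)).filter (fun j => pe r w (j+i) ∈ M)).image (· + i)
            ∈ NC d := NC_union_shift hi2 hid hS1 hS2
        have hS12r := (mem_NC.1 hS12).1
        have hinsH : insert e ((M.filter (fun f => f ∈ H.edges)).erase e) ⊆ H.edges := by
          intro f hf
          rw [Finset.mem_insert] at hf
          rcases hf with rfl | hf
          · exact heH
          · exact (Finset.mem_filter.1 (Finset.mem_of_mem_erase hf)).2
        have hlt : ∀ a ∈ (Finset.range (i-2)).filter (fun j => pe r w j ∈ M), a < i := by
          intro a ha
          have := Finset.mem_range.1 (Finset.mem_filter.1 ha).1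
          omega
        have hcard : M.card = ((M.filter (fun f => f ∈ H.edges)).erase e).card + 1
            + (((Finset.range (i-2)).filter (fun j => pe r w j ∈ M)).card
              + ((Finset.range (d-i)).filter (fun j => pe r w (j+i) ∈ M)).card) := by
          conv_lhs => rw [hMBL M hM]
          rw [Finset.card_union_of_disjoint (hdisjAI _ _ hinsH hS12r),
            Finset.card_image_of_injOn (pe_injOn_range hr2 hw hS12r),
            card_union_shift hlt,
            Finset.card_insert_of_notMem (Finset.notMem_erase e _)]
        have hb1 : r * ((Finset.range (i-2)).filter (fun j => pe r w j ∈ M)).card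
            ≤ (i-2)*(r-1)+1 := NC_card_bound hr2 hS1
        have hb2 : r * ((Finset.range (d-i)).filter (fun j => pe r w (j+i) ∈ M)).card
            ≤ (d-i)*(r-1)+1 := NC_card_bound hr2 hS2
        have hbA : r * ((M.filter (fun f => f ∈ H.edges)).erase e).card ≤ n - r := by
          have := matching_card_bound (removeVerts_wf hwfH e) (removeVerts_unif hunH e) hA
          rwa [hnre] at this
        have hdr : d*(r-1) = (i-2)*(r-1) + (d-i)*(r-1) + 2*(r-1) := by
          have hsum : (i-2) + (d-i) + 2 = d := by omega
          calc d*(r-1) = ((i-2)+(d-i)+2)*(r-1) := by rw [hsum]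
            _ = (i-2)*(r-1) + (d-i)*(r-1) + 2*(r-1) := by ring
        have hmul : r * (((M.filter (fun f => f ∈ H.edges)).erase e).card + 1
              + (((Finset.range (i-2)).filter (fun j => pe r w j ∈ M)).card
                + ((Finset.range (d-i)).filter (fun j => pe r w (j+i) ∈ M)).card))
            = r * ((M.filter (fun f => f ∈ H.edges)).erase e).card + r
              + (r * ((Finset.range (i-2)).filter (fun j => pe r w j ∈ M)).card
                + r * ((Finset.range (d-i)).filter (fun j => pe r w (j+i) ∈ M)).card) := by
          ring
        have hexp : n + d*(r-1) - r * M.card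
            = (2*r-4) + ((i-2)*(r-1)+1
                - r * ((Finset.range (i-2)).filter (fun j => pe r w j ∈ M)).card)
              + ((d-i)*(r-1)+1
                - r * ((Finset.range (d-i)).filter (fun j => pe r w (j+i) ∈ M)).card)
              + (n - r - r * ((M.filter (fun f => f ∈ H.edges)).erase e).card) := by
          rw [hcard]
          omega
        rw [hexp, hcard]
        ring
    rw [hfib, Finset.sum_biUnion hpd, Finset.sum_congr rfl hper, Finset.sum_neg_distrib,
      ← Finset.mul_sum]
  have hRHSe : (∑ e ∈ H.edges.filter (fun e => u ∈ e), (H.removeVerts e).matchPoly r x)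
      = ∑ e ∈ H.edges.filter (fun e => u ∈ e), ∑ A ∈ (H.removeVerts e).matchings,
          (-1:ℝ)^A.card * x ^ (n - r - r*A.card) := by
    refine Finset.sum_congr rfl (fun e he => ?_)
    rw [Finset.mem_filter] at he
    have h1 : (H.removeVerts e).verts.card = n - r := by
      show (H.verts \ e).card = n - r
      rw [Finset.card_sdiff_of_subset (hwfH e he.1), hunH e he.1]
    rw [matchPoly_eq_sum hr1 (removeVerts_wf hwfH e) (removeVerts_unif hunH e) x, h1]
  rw [matchPoly_eq_sum hr1 hwfT hunT x, hNT, loosePath_poly hr2 hPd x,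
    loosePath_poly hr2 hP1 x, loosePath_poly hr2 hP2 x,
    matchPoly_eq_sum hr1 (removeVerts_wf hwfH {u}) (removeVerts_unif hunH {u}) x, hnu, hRHSe,
    ← Finset.sum_filter_add_sum_filter_not T.matchings
      (fun M => ∃ e ∈ M, e ∈ H.edges ∧ u ∈ e)
      (fun M => (-1:ℝ)^M.card * x ^ (n + d*(r-1) - r * M.card)),
    partA, partB]
  ring
end
end
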